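/- arXiv:1302.5569 — 11 statements merged into one kernel-verified Lean document; each statement's English description precedes it below -/
import Mathlib

section
/- Let \mathfrak{g} be a finite-dimensional nilpotent Lie algebra over \mathbb{R} and let \theta be a nonzero closed 1-form on \mathfrak{g} (i.e. \theta \in \mathfrak{g}^* with d\theta = 0, where d is the Chevalley–Eilenberg differential). Then a 1-form \eta \in \mathfrak{g}^* satisfies d\eta - \eta \wedge \theta = 0 if and only if \eta is a real scalar multiple of \theta. -/
/-- On a finite-dimensional nilpotent real Lie algebra, for a nonzero closed 1-form `θ`,
a 1-form `η` solves `dη - η ∧ θ = 0` iff `η` is a scalar multiple of `θ`. -/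
theorem stmt0 (g : Type*) [LieRing g] [LieAlgebra ℝ g] [Module.Finite ℝ g]
    [LieRing.IsNilpotent g]
    (θ η : g →ₗ[ℝ] ℝ) (hθ0 : θ ≠ 0)
    (hθclosed : ∀ X Y : g, θ ⁅X, Y⁆ = 0) :
    (∀ X Y : g, -η ⁅X, Y⁆ - (η X * θ Y - η Y * θ X) = 0) ↔ ∃ c : ℝ, η = c • θ := by
  constructor
  · intro h
    -- find ξ with θ ξ = 1
    obtain ⟨ξ0, hξ0⟩ : ∃ x, θ x ≠ 0 := by
      by_contra hc
      push_neg at hc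
      exact hθ0 (LinearMap.ext fun x => hc x)
    set ξ : g := (θ ξ0)⁻¹ • ξ0 with hξdef
    have hξ : θ ξ = 1 := by
      simp [hξdef, inv_mul_cancel₀ hξ0]
    have key : ∀ X Y : g, η ⁅X, Y⁆ = η Y * θ X - η X * θ Y := by
      intro X Y
      have := h X Y
      linarith
    -- ad ξ is nilpotent
    obtain ⟨n, hn⟩ : IsNilpotent (LieAlgebra.ad ℝ g ξ) :=
      LieModule.isNilpotent_toEnd_of_isNilpotent ℝ g g ξ
    -- η vanishes on ker θ
    have hker : ∀ X : g, θ X = 0 → η X = 0 := by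
      intro X hX
      have iter : ∀ k : ℕ, θ (((LieAlgebra.ad ℝ g ξ) ^ k) X) = 0 ∧
          η (((LieAlgebra.ad ℝ g ξ) ^ k) X) = η X := by
        intro k
        induction k with
        | zero => exact ⟨by simpa using hX, by simp⟩
        | succ k ih =>
          obtain ⟨ih1, ih2⟩ := ih
          have hrw : ((LieAlgebra.ad ℝ g ξ) ^ (k + 1)) X =
              ⁅ξ, ((LieAlgebra.ad ℝ g ξ) ^ k) X⁆ := by
            rw [pow_succ']
            simp [LieAlgebra.ad_apply]
          refine ⟨by rw [hrw]; exact hθclosed _ _, ?_⟩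
          rw [hrw, key ξ (((LieAlgebra.ad ℝ g ξ) ^ k) X), hξ, ih1, ih2]
          ring
      have := (iter n).2
      rw [hn] at this
      simpa using this.symm
    refine ⟨η ξ, LinearMap.ext fun X => ?_⟩
    have hX : θ (X - θ X • ξ) = 0 := by simp [hξ]
    have := hker _ hX
    simp only [map_sub, map_smul, smul_eq_mul, sub_eq_zero] at this
    simp [this, mul_comm]
  · rintro ⟨c, rfl⟩ X Y
    simp [hθclosed X Y]
    ring
end

section
/- Let \mathfrak{g} be a finite-dimensional real Lie algebra with an abelian complex structure J. Then the derived subalgebra [\mathfrak{g},\mathfrak{g}] is abelian; equivalently, \mathfrak{g} is 2-step solvable. -/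
set_option linter.unusedSectionVars false

namespace Stmt1Aux

section Abstract

variable {L : Type*} [AddCommGroup L] (br : L → L → L)
variable (skew : ∀ u v, br u v = -br v u)
variable (addl : ∀ u v w, br (u + v) w = br u w + br v w)
variable (addr : ∀ u v w, br u (v + w) = br u v + br u w)
variable (leib : ∀ u v w, br u (br v w) = br (br u v) w + br v (br u w))

include addl in
theorem brz1 (u : L) : br 0 u = 0 := by
  have h := addl 0 0 u
  rw [add_zero] at h
  exact add_eq_left.mp h.symm

include addr in
theorem brz2 (u : L) : br u 0 = 0 := by
  have h := addr u 0 0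
  rw [add_zero] at h
  exact add_eq_left.mp h.symm

include addl in
theorem brn1 (u v : L) : br (-u) v = -br u v := by
  have h := addl u (-u) v
  rw [add_neg_cancel, brz1 br addl] at h
  rw [add_comm] at h
  exact eq_neg_of_add_eq_zero_left h.symm

include addr in
theorem brn2 (u v : L) : br u (-v) = -br u v := by
  have h := addr u v (-v)
  rw [add_neg_cancel, brz2 br addr] at h
  rw [add_comm] at h
  exact eq_neg_of_add_eq_zero_left h.symm

variable (A B : L → Prop)
variable (hA : ∀ x y, A x → A y → br x y = 0)
variable (hB : ∀ x y, B x → B y → br x y = 0)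
variable (hdec : ∀ u, ∃ p q, A p ∧ B q ∧ u = p + q)

include skew addl addr leib hA hB hdec in
/-- Petravchuk: brackets of mixed brackets vanish when L = A + B with A, B abelian. -/
theorem petra (a b c d : L) (haa : A a) (hbb : B b) (hcc : A c) (hdd : B d) :
    br (br a b) (br c d) = 0 := by
  obtain ⟨p', q', hp', hq', hbc⟩ := hdec (br b c)
  obtain ⟨r', s', hr', hs', had⟩ := hdec (br a d)
  have hca : br c a = 0 := hA c a hcc haa
  have hdb : br d b = 0 := hB d b hdd hbb
  have e1 : br (br a b) c = br a (br b c) := by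
    have h := leib c a b
    rw [hca, brz1 br addl, zero_add] at h
    rw [skew (br a b) c, h, skew c b, brn2 br addr, neg_neg]
  have e2 : br (br a b) d = br (br a d) b := by
    have h := leib d a b
    rw [hdb, brz2 br addr, add_zero] at h
    rw [skew (br a b) d, h, skew d a, brn1 br addl, neg_neg]
  have key := leib (br a b) c d
  rw [e1, e2] at key
  have t1 : br (br a (br b c)) d = br r' q' := by
    have e3 : br a (br b c) = br a q' := by
      rw [hbc, addr, hA a p' haa hp', zero_add]
    have h2 := leib d a q'
    rw [hB d q' hdd hq', brz2 br addr, add_zero] at h2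
    rw [e3, skew (br a q') d, h2, skew d a, brn1 br addl, neg_neg, had, addl,
      hB s' q' hs' hq', add_zero]
  have t2 : br c (br (br a d) b) = -br r' q' := by
    have e4 : br (br a d) b = br r' b := by
      rw [had, addl, hB s' b hs' hbb, add_zero]
    have h3 := leib c r' b
    rw [hA c r' hcc hr', brz1 br addl, zero_add] at h3
    rw [e4, h3, skew c b, brn2 br addr, hbc, addr, hA r' p' hr' hp', zero_add]
  rw [key, t1, t2, add_neg_cancel]

end Abstract

variable {g : Type*} [LieRing g] [LieAlgebra ℝ g]

/-- complexified bracket on g × g -/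
def br (u v : g × g) : g × g :=
  (⁅u.1, v.1⁆ - ⁅u.2, v.2⁆, ⁅u.1, v.2⁆ + ⁅u.2, v.1⁆)

theorem br_skew (u v : g × g) : br u v = - br v u := by
  simp only [br, Prod.neg_mk, Prod.mk.injEq]
  constructor
  · rw [← lie_skew u.1 v.1, ← lie_skew u.2 v.2]; abel
  · rw [← lie_skew u.1 v.2, ← lie_skew u.2 v.1]; abel

theorem br_add_left (u v w : g × g) : br (u + v) w = br u w + br v w := by
  simp only [br, Prod.fst_add, Prod.snd_add, add_lie, Prod.mk_add_mk, Prod.mk.injEq]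
  constructor <;> abel

theorem br_add_right (u v w : g × g) : br u (v + w) = br u v + br u w := by
  simp only [br, Prod.fst_add, Prod.snd_add, lie_add, Prod.mk_add_mk, Prod.mk.injEq]
  constructor <;> abel

theorem br_leibniz (u v w : g × g) :
    br u (br v w) = br (br u v) w + br v (br u w) := by
  simp only [br, Prod.mk_add_mk, Prod.mk.injEq, lie_add, add_lie, lie_sub, sub_lie,
    lie_lie]
  constructor <;> abel

variable (J : g →ₗ[ℝ] g)

def aP (x : g) : g × g := (x, -(J x))

def bP (x : g) : g × g := (x, J x)

variable (hJ2 : ∀ x : g, J (J x) = -x) (hab : ∀ X Y : g, ⁅J X, J Y⁆ = ⁅X, Y⁆)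

include hJ2 hab in
theorem h1 (x y : g) : ⁅x, J y⁆ = -⁅J x, y⁆ := by
  have := hab x (J y)
  rw [hJ2 y] at this
  simpa using this.symm

include hJ2 hab in
theorem br_aa (x y : g) : br (aP J x) (aP J y) = 0 := by
  simp only [br, aP, lie_neg, neg_lie, Prod.mk_eq_zero]
  constructor
  · rw [hab]; abel
  · rw [h1 J hJ2 hab]; abel

include hJ2 hab in
theorem br_bb (x y : g) : br (bP J x) (bP J y) = 0 := by
  simp only [br, bP, Prod.mk_eq_zero]
  constructor
  · rw [hab]; abel
  · rw [h1 J hJ2 hab]; abel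

include hJ2 in
theorem decomp (u : g × g) :
    u = aP J ((1/2 : ℝ) • (u.1 + J u.2)) + bP J ((1/2 : ℝ) • (u.1 - J u.2)) := by
  have h2 : J (J u.2) = -u.2 := hJ2 u.2
  simp only [aP, bP, Prod.mk_add_mk, map_smul, map_add, map_sub, h2, Prod.ext_iff]
  constructor
  · show u.1 = _
    module
  · show u.2 = _
    module

include hJ2 hab in
theorem quad (x y z w : g) : ⁅⁅x, y⁆, ⁅z, w⁆⁆ = (0 : g) := by
  -- embed into g × g
  have main : ∀ p q r s : g, br (br (aP J p) (bP J q)) (br (aP J r) (bP J s)) = 0 := by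
    intro p q r s
    refine petra br br_skew br_add_left br_add_right br_leibniz
      (fun u => ∃ x, u = aP J x) (fun u => ∃ x, u = bP J x) ?_ ?_ ?_
      (aP J p) (bP J q) (aP J r) (bP J s) ⟨p, rfl⟩ ⟨q, rfl⟩ ⟨r, rfl⟩ ⟨s, rfl⟩
    · rintro _ _ ⟨x, rfl⟩ ⟨y, rfl⟩; exact br_aa J hJ2 hab x y
    · rintro _ _ ⟨x, rfl⟩ ⟨y, rfl⟩; exact br_bb J hJ2 hab x y
    · intro u
      exact ⟨_, _, ⟨_, rfl⟩, ⟨_, rfl⟩, decomp J hJ2 u⟩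
  -- ι x = aP (x/2) + bP (x/2)
  have hι : ∀ x : g, ((x, 0) : g × g) = aP J ((1/2 : ℝ) • x) + bP J ((1/2 : ℝ) • x) := by
    intro x
    simp only [aP, bP, Prod.mk_add_mk, Prod.mk.injEq]
    constructor
    · module
    · simp
  have hbr : ∀ x y : g, br ((x, 0) : g × g) ((y, 0) : g × g) = (⁅x, y⁆, 0) := by
    intro x y
    simp [br]
  have expand : ∀ x y : g, br ((x, 0) : g × g) ((y, 0) : g × g) =
      br (aP J ((1/2:ℝ) • x)) (bP J ((1/2:ℝ) • y))
        + br (bP J ((1/2:ℝ) • x)) (aP J ((1/2:ℝ) • y)) := by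
    intro x y
    rw [hι x, hι y, br_add_left, br_add_right, br_add_right,
      br_aa J hJ2 hab, br_bb J hJ2 hab, zero_add, add_zero]
  have final : br (br ((x,0) : g × g) ((y,0) : g × g)) (br ((z,0) : g × g) ((w,0) : g × g)) = 0 := by
    rw [expand x y, expand z w, br_add_left, br_add_right, br_add_right]
    have m1 := main ((1/2:ℝ)•x) ((1/2:ℝ)•y) ((1/2:ℝ)•z) ((1/2:ℝ)•w)
    have m2 : br (br (aP J ((1/2:ℝ)•x)) (bP J ((1/2:ℝ)•y)))
        (br (bP J ((1/2:ℝ)•z)) (aP J ((1/2:ℝ)•w))) = 0 := by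
      rw [br_skew (bP J ((1/2:ℝ)•z)) (aP J ((1/2:ℝ)•w)),
        brn2 br br_add_right, main, neg_zero]
    have m3 : br (br (bP J ((1/2:ℝ)•x)) (aP J ((1/2:ℝ)•y)))
        (br (aP J ((1/2:ℝ)•z)) (bP J ((1/2:ℝ)•w))) = 0 := by
      rw [br_skew (bP J ((1/2:ℝ)•x)) (aP J ((1/2:ℝ)•y)),
        brn1 br br_add_left, main, neg_zero]
    have m4 : br (br (bP J ((1/2:ℝ)•x)) (aP J ((1/2:ℝ)•y)))
        (br (bP J ((1/2:ℝ)•z)) (aP J ((1/2:ℝ)•w))) = 0 := by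
      rw [br_skew (bP J ((1/2:ℝ)•x)) (aP J ((1/2:ℝ)•y)),
        br_skew (bP J ((1/2:ℝ)•z)) (aP J ((1/2:ℝ)•w)),
        brn1 br br_add_left, brn2 br br_add_right, main, neg_zero, neg_zero]
    rw [m1, m2, m3, m4]
    simp
  rw [hbr, hbr, hbr] at final
  exact congrArg Prod.fst final

end Stmt1Aux

/-- A Lie algebra with an abelian complex structure has abelian derived subalgebra. -/
theorem stmt1 (g : Type*) [LieRing g] [LieAlgebra ℝ g] [Module.Finite ℝ g]
    (J : g →ₗ[ℝ] g) (hJ2 : ∀ x : g, J (J x) = -x)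
    (hab : ∀ X Y : g, ⁅J X, J Y⁆ = ⁅X, Y⁆) :
    ∀ a ∈ LieAlgebra.derivedSeries ℝ g 1, ∀ b ∈ LieAlgebra.derivedSeries ℝ g 1,
      ⁅a, b⁆ = 0 := by
  have quad := Stmt1Aux.quad J hJ2 hab
  have hDS : LieAlgebra.derivedSeries ℝ g 1 = ⁅(⊤ : LieIdeal ℝ g), (⊤ : LieIdeal ℝ g)⁆ := by
    rw [LieAlgebra.derivedSeries_def, LieAlgebra.derivedSeriesOfIdeal_succ,
      LieAlgebra.derivedSeriesOfIdeal_zero]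
  have key2 := LieSubmodule.lieIdeal_oper_eq_linear_span' (R := ℝ) (L := g) (M := g)
    (I := ⊤) (N := ⊤)
  intro a ha b hb
  rw [hDS] at ha hb
  have ha' : a ∈ Submodule.span ℝ { m | ∃ x ∈ (⊤ : LieIdeal ℝ g), ∃ n ∈ (⊤ : LieIdeal ℝ g), ⁅x, n⁆ = m } := by
    rw [← key2]; exact ha
  have hb' : b ∈ Submodule.span ℝ { m | ∃ x ∈ (⊤ : LieIdeal ℝ g), ∃ n ∈ (⊤ : LieIdeal ℝ g), ⁅x, n⁆ = m } := by
    rw [← key2]; exact hb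
  -- first: fixed bracket on left
  have step1 : ∀ x y : g, ∀ b ∈ Submodule.span ℝ
      { m | ∃ x ∈ (⊤ : LieIdeal ℝ g), ∃ n ∈ (⊤ : LieIdeal ℝ g), ⁅x, n⁆ = m }, ⁅⁅x, y⁆, b⁆ = 0 := by
    intro x y b hb
    refine Submodule.span_induction ?_ ?_ ?_ ?_ hb
    · rintro m ⟨z, -, w, -, rfl⟩; exact quad x y z w
    · simp
    · intro m n _ _ hm hn; rw [lie_add, hm, hn, add_zero]
    · intro t m _ hm; rw [lie_smul, hm, smul_zero]
  refine Submodule.span_induction ?_ ?_ ?_ ?_ ha'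
  · rintro m ⟨z, -, w, -, rfl⟩; exact step1 z w b hb'
  · simp
  · intro m n _ _ hm hn; rw [add_lie, hm, hn, add_zero]
  · intro t m _ hm; rw [smul_lie, hm, smul_zero]
end

section
/- Let \mathfrak{g} be a finite-dimensional real Lie algebra with an abelian complex structure J. Then J\mathfrak{g}^1 = \{JX : X \in [\mathfrak{g},\mathfrak{g}]\} is an abelian Lie subalgebra of \mathfrak{g}. -/
section AbelianJ

variable {g : Type*} [LieRing g] [LieAlgebra ℝ g]

/-- Auxiliary bilinear operation: (a real avatar of) the `p`-component of `⁅πx, σy⁆`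
in the complexification, for an abelian complex structure `J`. -/
def Fop (J : g →ₗ[ℝ] g) (x y : g) : g := ⁅x, y⁆ + J ⁅x, J y⁆

/-- Auxiliary bilinear operation: the `q`-component counterpart of `Fop`. -/
def Gop (J : g →ₗ[ℝ] g) (x y : g) : g := ⁅x, y⁆ - J ⁅x, J y⁆

variable (J : g →ₗ[ℝ] g) (hJ2 : ∀ x : g, J (J x) = -x)
  (hab : ∀ X Y : g, ⁅J X, J Y⁆ = ⁅X, Y⁆)

lemma Fop_sub_left (x x' y : g) : Fop J (x - x') y = Fop J x y - Fop J x' y := by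
  unfold Fop; rw [sub_lie, sub_lie, map_sub]; abel

lemma Fop_sub_right (x y y' : g) : Fop J x (y - y') = Fop J x y - Fop J x y' := by
  unfold Fop; rw [map_sub, lie_sub, lie_sub, map_sub]; abel

lemma Fop_smul_left (t : ℝ) (x y : g) : Fop J (t • x) y = t • Fop J x y := by
  unfold Fop; rw [smul_lie, smul_lie, map_smul, smul_add]

lemma Fop_smul_right (t : ℝ) (x y : g) : Fop J x (t • y) = t • Fop J x y := by
  unfold Fop; rw [map_smul, lie_smul, lie_smul, map_smul, smul_add]

section
include hJ2 hab

lemma h2R (x y : g) : ⁅x, J y⁆ = -⁅J x, y⁆ := by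
  have h := hab x (J y)
  rw [hJ2, lie_neg] at h
  exact h.symm

lemma h2L (x y : g) : ⁅J x, y⁆ = -⁅x, J y⁆ := by
  rw [h2R J hJ2 hab x y, neg_neg]

lemma A1 (x x' y : g) :
    ⁅x, ⁅x', y⁆⁆ + ⁅J x, ⁅x', J y⁆⁆ = ⁅x', ⁅x, y⁆⁆ + ⁅J x', ⁅x, J y⁆⁆ := by
  rw [h2R J hJ2 hab x' y, h2R J hJ2 hab x y, lie_neg, lie_neg,
    leibniz_lie x x' y, leibniz_lie (J x) (J x') y, hab x x']
  abel

lemma A2 (x x' y : g) :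
    ⁅x, ⁅x', J y⁆⁆ - ⁅J x, ⁅x', y⁆⁆ = ⁅x', ⁅x, J y⁆⁆ - ⁅J x', ⁅x, y⁆⁆ := by
  rw [← hab x' y, ← hab x y, leibniz_lie x x' (J y),
    leibniz_lie (J x) (J x') (J y), hab x x']
  abel

lemma B1 (x y y' : g) :
    ⁅y', ⁅x, y⁆⁆ - ⁅J y', ⁅x, J y⁆⁆ = ⁅y, ⁅x, y'⁆⁆ - ⁅J y, ⁅x, J y'⁆⁆ := by
  rw [← lie_skew x y, ← lie_skew x y', ← lie_skew x (J y), ← lie_skew x (J y'),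
    lie_neg, lie_neg, lie_neg, lie_neg,
    leibniz_lie y' y x, leibniz_lie (J y') (J y) x, hab y' y]
  abel

lemma B2 (x y y' : g) :
    ⁅y', ⁅x, J y⁆⁆ + ⁅J y', ⁅x, y⁆⁆ = ⁅y, ⁅x, J y'⁆⁆ + ⁅J y, ⁅x, y'⁆⁆ := by
  rw [← lie_skew x (J y), ← lie_skew x y, ← lie_skew x (J y'), ← lie_skew x y',
    lie_neg, lie_neg, lie_neg, lie_neg,
    leibniz_lie y' (J y) x, leibniz_lie (J y') y x, h2R J hJ2 hab y' y, neg_lie]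
  abel

lemma decF (x x' y : g) :
    Fop J x (Gop J x' y) =
      (⁅x, ⁅x', y⁆⁆ + ⁅J x, ⁅x', J y⁆⁆) + J (⁅x, ⁅x', J y⁆⁆ - ⁅J x, ⁅x', y⁆⁆) := by
  unfold Fop Gop
  rw [lie_sub, h2R J hJ2 hab x ⁅x', J y⁆, map_sub, hJ2, sub_neg_eq_add,
    sub_neg_eq_add, lie_add, h2R J hJ2 hab x ⁅x', y⁆, neg_add_eq_sub]

lemma decF2 (x y y' : g) :
    Fop J (Fop J x y) y' =
      -(⁅y', ⁅x, y⁆⁆ - ⁅J y', ⁅x, J y⁆⁆) - J (⁅y', ⁅x, J y⁆⁆ + ⁅J y', ⁅x, y⁆⁆) := by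
  unfold Fop
  rw [add_lie, h2L J hJ2 hab ⁅x, J y⁆ y', add_lie, hab ⁅x, J y⁆ y',
    ← lie_skew y' ⁅x, y⁆, ← lie_skew (J y') ⁅x, J y⁆,
    ← lie_skew (J y') ⁅x, y⁆, ← lie_skew y' ⁅x, J y⁆]
  rw [show (-⁅⁅x, J y⁆, y'⁆ + -⁅⁅x, y⁆, J y'⁆ : g)
      = -(⁅⁅x, y⁆, J y'⁆ + ⁅⁅x, J y⁆, y'⁆) from by abel, map_neg, sub_neg_eq_add]
  abel

lemma decG2 (x y y' : g) :
    Gop J (Fop J x y) y' =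
      -(⁅y', ⁅x, y⁆⁆ - ⁅J y', ⁅x, J y⁆⁆) + J (⁅y', ⁅x, J y⁆⁆ + ⁅J y', ⁅x, y⁆⁆) := by
  unfold Gop Fop
  rw [add_lie, h2L J hJ2 hab ⁅x, J y⁆ y', add_lie, hab ⁅x, J y⁆ y',
    ← lie_skew y' ⁅x, y⁆, ← lie_skew (J y') ⁅x, J y⁆,
    ← lie_skew (J y') ⁅x, y⁆, ← lie_skew y' ⁅x, J y⁆]
  rw [show (-⁅⁅x, J y⁆, y'⁆ + -⁅⁅x, y⁆, J y'⁆ : g)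
      = -(⁅⁅x, y⁆, J y'⁆ + ⁅⁅x, J y⁆, y'⁆) from by abel, map_neg]
  abel

lemma idIF (x x' y : g) : Fop J x (Gop J x' y) = Fop J x' (Gop J x y) := by
  rw [decF J hJ2 hab x x' y, decF J hJ2 hab x' x y, A1 J hJ2 hab x x' y,
    A2 J hJ2 hab x x' y]

lemma idIIF (x y y' : g) : Fop J (Fop J x y) y' = Fop J (Fop J x y') y := by
  rw [decF2 J hJ2 hab x y y', decF2 J hJ2 hab x y' y, B1 J hJ2 hab x y y',
    B2 J hJ2 hab x y y']

lemma idIIG (x y y' : g) : Gop J (Fop J x y) y' = Gop J (Fop J x y') y := by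
  rw [decG2 J hJ2 hab x y y', decG2 J hJ2 hab x y' y, B1 J hJ2 hab x y y',
    B2 J hJ2 hab x y y']

lemma swapT (a b c d : g) :
    Fop J (Fop J a b) (Gop J c d) = Fop J (Fop J c d) (Gop J a b) := by
  have swap1 : ∀ a b c d : g,
      Fop J (Fop J a b) (Gop J c d) = Fop J (Fop J c b) (Gop J a d) := by
    intro a b c d
    rw [idIIF J hJ2 hab a b (Gop J c d), idIF J hJ2 hab a c d,
      ← idIIF J hJ2 hab c b (Gop J a d)]
  have swap2 : ∀ a b c d : g,
      Fop J (Fop J a b) (Gop J c d) = Fop J (Fop J a d) (Gop J c b) := by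
    intro a b c d
    rw [idIF J hJ2 hab (Fop J a b) c d, idIIG J hJ2 hab a b d,
      ← idIF J hJ2 hab (Fop J a d) c b]
  rw [swap1 a b c d, swap2 c b a d]

lemma Fskew (a b : g) : Fop J a b - Fop J b a = (2 : ℝ) • ⁅a, b⁆ := by
  unfold Fop
  have h : ⁅b, J a⁆ = ⁅a, J b⁆ := by
    rw [h2R J hJ2 hab b a]
    exact lie_skew a (J b)
  have h' : ⁅b, a⁆ = -⁅a, b⁆ := by rw [← neg_neg ⁅b, a⁆, lie_skew]
  rw [h, h', two_smul]
  abel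

lemma Gskew (a b : g) : Gop J a b - Gop J b a = (2 : ℝ) • ⁅a, b⁆ := by
  unfold Gop
  have h : ⁅b, J a⁆ = ⁅a, J b⁆ := by
    rw [h2R J hJ2 hab b a]
    exact lie_skew a (J b)
  have h' : ⁅b, a⁆ = -⁅a, b⁆ := by rw [← neg_neg ⁅b, a⁆, lie_skew]
  rw [h, h', two_smul]
  abel

lemma keylemma (a b c d : g) : ⁅⁅a, b⁆, ⁅c, d⁆⁆ = 0 := by
  have E : Fop J (Fop J a b - Fop J b a) (Gop J c d - Gop J d c)
      = Fop J (Fop J c d - Fop J d c) (Gop J a b - Gop J b a) := by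
    rw [Fop_sub_left, Fop_sub_right, Fop_sub_right, Fop_sub_left,
      Fop_sub_right, Fop_sub_right]
    rw [swapT J hJ2 hab a b c d, swapT J hJ2 hab a b d c,
      swapT J hJ2 hab b a c d, swapT J hJ2 hab b a d c]
    abel
  rw [Fskew J hJ2 hab a b, Fskew J hJ2 hab c d, Gskew J hJ2 hab c d,
    Gskew J hJ2 hab a b] at E
  rw [Fop_smul_left, Fop_smul_right, Fop_smul_left, Fop_smul_right,
    smul_smul, smul_smul] at E
  have E2 : Fop J ⁅a, b⁆ ⁅c, d⁆ = Fop J ⁅c, d⁆ ⁅a, b⁆ :=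
    smul_right_injective g (by norm_num : (2 * 2 : ℝ) ≠ 0) E
  have E3 := Fskew J hJ2 hab ⁅a, b⁆ ⁅c, d⁆
  rw [E2, sub_self] at E3
  have := E3.symm
  rcases smul_eq_zero.mp this with h | h
  · norm_num at h
  · exact h

end

end AbelianJ

/-- For an abelian complex structure `J`, the image `J 𝔤¹` of the derived subalgebra
is an abelian Lie subalgebra. -/
theorem stmt4 (g : Type*) [LieRing g] [LieAlgebra ℝ g] [Module.Finite ℝ g]
    (J : g →ₗ[ℝ] g) (hJ2 : ∀ x : g, J (J x) = -x)
    (hab : ∀ X Y : g, ⁅J X, J Y⁆ = ⁅X, Y⁆) :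
    ∃ S : LieSubalgebra ℝ g,
      (S : Set g) = J '' ((LieAlgebra.derivedSeries ℝ g 1 : LieIdeal ℝ g) : Set g) ∧
      ∀ a ∈ S, ∀ b ∈ S, ⁅a, b⁆ = 0 := by
  have key : ∀ a b c d : g, ⁅⁅a, b⁆, ⁅c, d⁆⁆ = 0 := fun a b c d =>
    keylemma J hJ2 hab a b c d
  set D : LieIdeal ℝ g := LieAlgebra.derivedSeries ℝ g 1 with hD
  have hDspan : D.toSubmodule = Submodule.span ℝ
      {m : g | ∃ x ∈ (⊤ : LieIdeal ℝ g), ∃ n ∈ (⊤ : LieIdeal ℝ g), ⁅x, n⁆ = m} := by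
    rw [hD, LieAlgebra.derivedSeries_def, show (1 : ℕ) = 0 + 1 from rfl,
      LieAlgebra.derivedSeriesOfIdeal_succ, LieAlgebra.derivedSeriesOfIdeal_zero]
    exact LieSubmodule.lieIdeal_oper_eq_linear_span' _ _
  have hu : ∀ u ∈ D, ∀ c d : g, ⁅u, ⁅c, d⁆⁆ = 0 := by
    intro u huD
    have hu' : u ∈ Submodule.span ℝ
        {m : g | ∃ x ∈ (⊤ : LieIdeal ℝ g), ∃ n ∈ (⊤ : LieIdeal ℝ g), ⁅x, n⁆ = m} := by
      rw [← hDspan]; exact huD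
    refine Submodule.span_induction
      (p := fun m _ => ∀ c d : g, ⁅m, ⁅c, d⁆⁆ = 0) ?_ ?_ ?_ ?_ hu'
    · rintro m ⟨x, -, n, -, rfl⟩ c d; exact key x n c d
    · intro c d; show ⁅(0 : g), ⁅c, d⁆⁆ = 0; rw [zero_lie]
    · intro p q _ _ hp hq c d
      show ⁅p + q, ⁅c, d⁆⁆ = 0
      rw [add_lie, hp c d, hq c d, add_zero]
    · intro t p _ hp c d
      show ⁅t • p, ⁅c, d⁆⁆ = 0
      rw [smul_lie, hp c d, smul_zero]
  have habel : ∀ u ∈ D, ∀ v ∈ D, ⁅u, v⁆ = 0 := by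
    intro u huD v hvD
    have hv' : v ∈ Submodule.span ℝ
        {m : g | ∃ x ∈ (⊤ : LieIdeal ℝ g), ∃ n ∈ (⊤ : LieIdeal ℝ g), ⁅x, n⁆ = m} := by
      rw [← hDspan]; exact hvD
    refine Submodule.span_induction
      (p := fun m _ => ⁅u, m⁆ = 0) ?_ ?_ ?_ ?_ hv'
    · rintro m ⟨x, -, n, -, rfl⟩; exact hu u huD x n
    · show ⁅u, (0 : g)⁆ = 0; rw [lie_zero]
    · intro p q _ _ hp hq
      show ⁅u, p + q⁆ = 0
      rw [lie_add, hp, hq, add_zero]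
    · intro t p _ hp
      show ⁅u, t • p⁆ = 0
      rw [lie_smul, hp, smul_zero]
  refine ⟨{ toSubmodule := Submodule.map (J : g →ₗ[ℝ] g) D.toSubmodule,
            lie_mem' := ?_ }, ?_, ?_⟩
  · intro x y hx hy
    obtain ⟨u, hu', rfl⟩ := hx
    obtain ⟨v, hv', rfl⟩ := hy
    have h0 : ⁅J u, J v⁆ = 0 := by
      rw [hab]
      exact habel u hu' v hv'
    rw [h0]
    exact Submodule.zero_mem _
  · show (Submodule.map (J : g →ₗ[ℝ] g) D.toSubmodule : Set g) = J '' (D : Set g)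
    rw [Submodule.map_coe]
    rfl
  · intro a ha b hb
    obtain ⟨u, hu', rfl⟩ := ha
    obtain ⟨v, hv', rfl⟩ := hb
    rw [hab]
    exact habel u hu' v hv'
end

section
/- Let \mathfrak{g} be a finite-dimensional real Lie algebra with an abelian complex structure J, and let \mathfrak{g}^1 = [\mathfrak{g},\mathfrak{g}]. Then \mathfrak{g}^1 \cap J\mathfrak{g}^1 is contained in the center of the subalgebra \mathfrak{g}^1 + J\mathfrak{g}^1. -/
set_option maxRecDepth 4000

section Aux

variable {g : Type*} [LieRing g] [LieAlgebra ℝ g]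

/-- The complexification bracket on `g × g`. -/
private def br (a b : g × g) : g × g :=
  (⁅a.1, b.1⁆ - ⁅a.2, b.2⁆, ⁅a.1, b.2⁆ + ⁅a.2, b.1⁆)

/-- the `(1,0)` embedding -/
private def emA (J : g →ₗ[ℝ] g) (u : g) : g × g := (u, -(J u))

/-- the `(0,1)` embedding -/
private def emB (J : g →ₗ[ℝ] g) (u : g) : g × g := (u, J u)

private lemma br_skew (a b : g × g) : br a b = - br b a := by
  simp only [br, Prod.neg_mk, Prod.mk.injEq]
  constructor
  · rw [← lie_skew a.1, ← lie_skew a.2]; abel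
  · rw [← lie_skew a.1, ← lie_skew a.2]; abel

private lemma br_add_right (a b c : g × g) : br a (b + c) = br a b + br a c := by
  simp only [br, Prod.fst_add, Prod.snd_add, lie_add, Prod.mk_add_mk, Prod.mk.injEq]
  constructor <;> abel

private lemma br_add_left (a b c : g × g) : br (a + b) c = br a c + br b c := by
  simp only [br, Prod.fst_add, Prod.snd_add, add_lie, Prod.mk_add_mk, Prod.mk.injEq]
  constructor <;> abel

private lemma br_neg_right (a b : g × g) : br a (-b) = - br a b := by
  simp only [br, Prod.fst_neg, Prod.snd_neg, lie_neg, Prod.neg_mk, Prod.mk.injEq]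
  constructor <;> abel

private lemma br_neg_left (a b : g × g) : br (-a) b = - br a b := by
  simp only [br, Prod.fst_neg, Prod.snd_neg, neg_lie, Prod.neg_mk, Prod.mk.injEq]
  constructor <;> abel

private lemma br_zero_left (a : g × g) : br 0 a = 0 := by
  simp [br]

private lemma br_zero_right (a : g × g) : br a 0 = 0 := by
  simp [br]

private lemma br_leibniz (a b c : g × g) :
    br a (br b c) = br (br a b) c + br b (br a c) := by
  simp only [br, lie_add, add_lie, lie_sub, sub_lie, Prod.mk_add_mk, Prod.mk.injEq]
  constructor <;>
    · simp only [lie_lie, lie_add, lie_sub]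
      abel

section WithJ

variable (J : g →ₗ[ℝ] g) (hJ2 : ∀ x : g, J (J x) = -x)
  (hab : ∀ X Y : g, ⁅J X, J Y⁆ = ⁅X, Y⁆)

include hJ2 hab

private lemma hskew : ∀ u v : g, ⁅J u, v⁆ = -⁅u, J v⁆ := by
  intro u v
  have h := hab u (J v)
  rw [hJ2, lie_neg] at h
  exact neg_eq_iff_eq_neg.mp h

private lemma brAA : ∀ u v : g, br (emA J u) (emA J v) = 0 := by
  intro u v
  simp only [br, emA, Prod.mk_eq_zero]
  constructor
  · rw [neg_lie, lie_neg, neg_neg, hab, sub_self]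
  · rw [lie_neg, neg_lie, hskew J hJ2 hab u v, neg_neg, neg_add_cancel]

private lemma brBB : ∀ u v : g, br (emB J u) (emB J v) = 0 := by
  intro u v
  simp only [br, emB, Prod.mk_eq_zero]
  constructor
  · rw [hab, sub_self]
  · rw [hskew J hJ2 hab u v]; abel

private lemma hdecomp : ∀ z : g × g,
    z = emA J ((2⁻¹ : ℝ) • (z.1 + J z.2)) + emB J ((2⁻¹ : ℝ) • (z.1 - J z.2)) := by
  intro z
  have h1 : (2⁻¹ : ℝ) • (z.1 + J z.2) + (2⁻¹ : ℝ) • (z.1 - J z.2) = z.1 := by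
    module
  have h2 : -(J ((2⁻¹ : ℝ) • (z.1 + J z.2))) + J ((2⁻¹ : ℝ) • (z.1 - J z.2)) = z.2 := by
    simp only [map_smul, map_add, map_sub, hJ2]
    module
  simp only [emA, emB, Prod.mk_add_mk]
  exact Prod.ext h1.symm h2.symm

/-- The core (Petravchuk-style) computation. -/
private lemma core : ∀ u v w s : g,
    br (br (emA J u) (emB J v)) (br (emA J w) (emB J s)) = 0 := by
  intro u v w s
  set a := emA J u with ha
  set b := emB J v with hb
  set x := emA J w with hx
  set y := emB J s with hy
  set c := br b x with hc
  set d := br a y with hd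
  set cA := emA J ((2⁻¹ : ℝ) • (c.1 + J c.2)) with hcA
  set cB := emB J ((2⁻¹ : ℝ) • (c.1 - J c.2)) with hcB
  set dA := emA J ((2⁻¹ : ℝ) • (d.1 + J d.2)) with hdA
  set dB := emB J ((2⁻¹ : ℝ) • (d.1 - J d.2)) with hdB
  have hcdec : c = cA + cB := hdecomp J hJ2 hab c
  have hddec : d = dA + dB := hdecomp J hJ2 hab d
  -- [[a,b],x] = [a,c]
  have s1 : br (br a b) x = br a c := by
    have h := br_leibniz a b x
    rw [brAA J hJ2 hab u w, br_zero_right, add_zero] at h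
    exact h.symm
  -- [a,c] = [a,cB]
  have s2 : br a c = br a cB := by
    rw [hcdec, br_add_right, brAA J hJ2 hab, zero_add]
  -- [[a,cB],y] = -[cB,d]
  have s3 : br (br a cB) y = - br cB d := by
    have h := br_leibniz a cB y
    rw [brBB J hJ2 hab, br_zero_right, ← hd] at h
    linear_combination (norm := abel) -h
  -- -[cB,d] = [dA, cB]
  have s4 : - br cB d = br dA cB := by
    rw [hddec, br_add_right, brBB J hJ2 hab, add_zero, br_skew cB dA, neg_neg]
  -- [[a,b],y] = -[b,d]
  have s5 : br (br a b) y = - br b d := by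
    have h := br_leibniz a b y
    rw [← hd, brBB J hJ2 hab, br_zero_right] at h
    linear_combination (norm := abel) -h
  -- [x,[[a,b],y]] = -[dA,cB]
  have s6 : br x (br (br a b) y) = - br dA cB := by
    rw [s5, br_neg_right]
    have hbd : br b d = br b dA := by
      rw [hddec, br_add_right, brBB J hJ2 hab, add_zero]
    rw [hbd, br_skew b dA, br_neg_right, neg_neg]
    have h := br_leibniz x dA b
    rw [brAA J hJ2 hab w, br_zero_left, zero_add] at h
    rw [h]
    have hxb : br x b = -c := by
      rw [br_skew x b, ← hc]
    rw [hxb, br_neg_right, hcdec, br_add_right, brAA J hJ2 hab, zero_add]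
  -- assemble
  have main := br_leibniz (br a b) x y
  rw [s1, s2, s3, s4, s6] at main
  rw [main]
  abel

private lemma quad : ∀ z₁ z₂ z₃ z₄ : g × g, br (br z₁ z₂) (br z₃ z₄) = 0 := by
  have core2 : ∀ u v w s : g,
      br (br (emA J u) (emB J v)) (br (emB J w) (emA J s)) = 0 := by
    intro u v w s
    rw [br_skew (emB J w) (emA J s), br_neg_right, core J hJ2 hab, neg_zero]
  have core3 : ∀ u v w s : g,
      br (br (emB J u) (emA J v)) (br (emA J w) (emB J s)) = 0 := by
    intro u v w s
    rw [br_skew (emB J u) (emA J v), br_neg_left, core J hJ2 hab, neg_zero]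
  have core4 : ∀ u v w s : g,
      br (br (emB J u) (emA J v)) (br (emB J w) (emA J s)) = 0 := by
    intro u v w s
    rw [br_skew (emB J u) (emA J v), br_neg_left, core2, neg_zero]
  intro z₁ z₂ z₃ z₄
  rw [hdecomp J hJ2 hab z₁, hdecomp J hJ2 hab z₂, hdecomp J hJ2 hab z₃,
    hdecomp J hJ2 hab z₄]
  simp only [br_add_left, br_add_right, brAA J hJ2 hab, brBB J hJ2 hab,
    core J hJ2 hab, core2, core3, core4, br_zero_left, br_zero_right, add_zero, zero_add]

/-- Metabelian property: double brackets of brackets vanish. -/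
private lemma meta_aux (p q r t : g) : ⁅⁅p, q⁆, ⁅r, t⁆⁆ = (0 : g) := by
  have h := quad J hJ2 hab (p, (0 : g)) (q, 0) (r, 0) (t, 0)
  simp only [br, lie_zero, zero_lie, sub_zero, add_zero, zero_add, Prod.mk_eq_zero] at h
  exact h.1

end WithJ

end Aux

/-- For an abelian complex structure, `𝔤¹ ∩ J𝔤¹` is contained in the center of
the subalgebra `𝔤¹ + J𝔤¹`. -/
theorem stmt5 (g : Type*) [LieRing g] [LieAlgebra ℝ g] [Module.Finite ℝ g]
    (J : g →ₗ[ℝ] g) (hJ2 : ∀ x : g, J (J x) = -x)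
    (hab : ∀ X Y : g, ⁅J X, J Y⁆ = ⁅X, Y⁆) :
    ∀ x : g, x ∈ LieAlgebra.derivedSeries ℝ g 1 →
      (∃ y ∈ LieAlgebra.derivedSeries ℝ g 1, x = J y) →
      ∀ a ∈ LieAlgebra.derivedSeries ℝ g 1, ∀ b ∈ LieAlgebra.derivedSeries ℝ g 1,
        ⁅x, a + J b⁆ = 0 := by
  -- the derived subalgebra is abelian
  have habD : ∀ p ∈ LieAlgebra.derivedSeries ℝ g 1, ∀ q ∈ LieAlgebra.derivedSeries ℝ g 1,
      ⁅p, q⁆ = (0 : g) := by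
    have hspan : ∀ z : g, z ∈ LieAlgebra.derivedSeries ℝ g 1 →
        z ∈ Submodule.span ℝ { m : g | ∃ x' ∈ (⊤ : LieIdeal ℝ g), ∃ n ∈ (⊤ : LieIdeal ℝ g),
          ⁅x', n⁆ = m } := by
      intro z hz
      have he : LieAlgebra.derivedSeries ℝ g 1 = ⁅(⊤ : LieIdeal ℝ g), (⊤ : LieIdeal ℝ g)⁆ := rfl
      rw [he] at hz
      rw [← LieSubmodule.mem_toSubmodule, LieSubmodule.lieIdeal_oper_eq_linear_span'] at hz
      exact hz
    intro p hp q hq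
    have hp' := hspan p hp
    have hq' := hspan q hq
    refine Submodule.span_induction ?_ ?_ ?_ ?_ hp'
    · rintro m ⟨u, -, v, -, rfl⟩
      refine Submodule.span_induction ?_ ?_ ?_ ?_ hq'
      · rintro m' ⟨r, -, t, -, rfl⟩
        exact meta_aux J hJ2 hab u v r t
      · simp
      · intro y₁ y₂ _ _ h₁ h₂; rw [lie_add, h₁, h₂, add_zero]
      · intro c y₁ _ h₁; rw [lie_smul, h₁, smul_zero]
    · simp
    · intro y₁ y₂ _ _ h₁ h₂; rw [add_lie, h₁, h₂, add_zero]
    · intro c y₁ _ h₁; rw [smul_lie, h₁, smul_zero]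
  intro x hx hxy a ha b hb
  obtain ⟨y, hy, rfl⟩ := hxy
  rw [lie_add]
  have h1 : ⁅J y, a⁆ = 0 := habD _ hx _ ha
  have h2 : ⁅J y, J b⁆ = 0 := by rw [hab]; exact habD _ hy _ hb
  rw [h1, h2, add_zero]
end

section
/- Let (\mathcal{A}, \cdot) be a finite-dimensional commutative associative algebra over \mathbb{R} (not necessarily unital). Define the affine Lie algebra aff(\mathcal{A}) = \mathcal{A} \oplus \mathcal{A} with bracket [(x,y),(x',y')] = (0, x \cdot y' - x' \cdot y). Then aff(\mathcal{A}) is a Lie algebra, and it is nilpotent if and only if \mathcal{A} is nilpotent as an associative algebra. -/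
section Aff
variable (A : Type*) [NonUnitalCommRing A] [Module ℝ A]
    [SMulCommClass ℝ A A] [IsScalarTower ℝ A A]

@[reducible] def affLR : LieRing (A × A) where
  toAddCommGroup := Prod.instAddCommGroup
  bracket p q := (0, p.1 * q.2 - q.1 * p.2)
  add_lie p q r := by
    refine Prod.ext (by simp) ?_
    simp [add_mul, mul_add]
    abel
  lie_add p q r := by
    refine Prod.ext (by simp) ?_
    simp [add_mul, mul_add]
    abel
  lie_self p := by
    refine Prod.ext (by simp) (by simp)
  leibniz_lie p q r := by
    refine Prod.ext (by simp) ?_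
    simp [mul_sub, sub_mul, mul_assoc, mul_comm, mul_left_comm]

@[reducible] def affLA : @LieAlgebra ℝ (A × A) _ (affLR A) :=
  letI := affLR A
  { toModule := Prod.instModule
    lie_smul := by
      intro t p q
      refine Prod.ext (by show (0:A) = t • (0:A); simp) ?_
      show p.1 * (t • q.2) - (t • q.1) * p.2 = t • (p.1 * q.2 - q.1 * p.2)
      rw [mul_smul_comm, smul_mul_assoc, smul_sub] }

local instance : LieRing (A × A) := affLR A
local instance : LieAlgebra ℝ (A × A) := affLA A

/-- span of products of `m+1` elements -/
def affT (m : ℕ) : Submodule ℝ A :=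
  Submodule.span ℝ {z : A | ∃ (a : A) (l : List A), l.length = m ∧ z = l.foldl (· * ·) a}

lemma affT_succ_le (m : ℕ) : affT A (m + 1) ≤ affT A m := by
  rw [affT, Submodule.span_le]
  rintro z ⟨a, l, hl, rfl⟩
  cases l with
  | nil => simp at hl
  | cons b l' =>
    apply Submodule.subset_span
    exact ⟨a * b, l', by simpa using hl, by simp⟩

lemma mul_mem_affT {m : ℕ} (x : A) {y : A} (hy : y ∈ affT A m) :
    x * y ∈ affT A (m + 1) := by
  have : Submodule.map (LinearMap.mulLeft ℝ x) (affT A m) ≤ affT A (m + 1) := by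
    rw [affT, Submodule.map_span_le]
    rintro z ⟨a, l, hl, rfl⟩
    apply Submodule.subset_span
    refine ⟨a, l ++ [x], by simp [hl], ?_⟩
    rw [List.foldl_append]
    simp [LinearMap.mulLeft_apply, mul_comm]
  exact this ⟨y, hy, rfl⟩

def affS (m : ℕ) : LieSubmodule ℝ (A × A) (A × A) where
  carrier := {p : A × A | p.1 = 0 ∧ p.2 ∈ affT A m}
  add_mem' := by rintro p q ⟨hp1, hp2⟩ ⟨hq1, hq2⟩; exact ⟨by simp [hp1, hq1], add_mem hp2 hq2⟩
  zero_mem' := ⟨rfl, zero_mem _⟩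
  smul_mem' := by rintro t p ⟨hp1, hp2⟩; exact ⟨by simp [hp1], Submodule.smul_mem _ t hp2⟩
  lie_mem := by
    rintro x p ⟨hp1, hp2⟩
    refine ⟨rfl, ?_⟩
    show x.1 * p.2 - p.1 * x.2 ∈ affT A m
    rw [hp1, zero_mul, sub_zero]
    exact affT_succ_le A m (mul_mem_affT A x.1 hp2)

lemma mem_affS {m : ℕ} {p : A × A} : p ∈ affS A m ↔ p.1 = 0 ∧ p.2 ∈ affT A m := Iff.rfl

lemma fold_mem_lcs (l : List A) (a : A) :
    ((0 : A), l.foldl (· * ·) a) ∈ LieModule.lowerCentralSeries ℝ (A × A) (A × A) l.length := by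
  induction l using List.reverseRecOn generalizing a with
  | nil => simp
  | append_singleton l x ih =>
    rw [List.length_append, List.foldl_append]
    simp only [List.length_cons, List.length_nil, List.foldl_cons, List.foldl_nil]
    rw [LieModule.lowerCentralSeries_succ]
    have h : ((0 : A), l.foldl (· * ·) a * x) = ⁅((x, 0) : A × A), ((0 : A), l.foldl (· * ·) a)⁆ := by
      show _ = ((0 : A), x * l.foldl (· * ·) a - 0 * 0)
      rw [mul_comm]; simp
    rw [h]
    exact LieSubmodule.lie_mem_lie (LieSubmodule.mem_top _) (ih a)

lemma lcs_le_affS (m : ℕ) :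
    LieModule.lowerCentralSeries ℝ (A × A) (A × A) (m + 1) ≤ affS A m := by
  induction m with
  | zero =>
    rw [LieModule.lowerCentralSeries_succ, LieSubmodule.lie_le_iff]
    intro x _ p _
    refine ⟨rfl, ?_⟩
    show x.1 * p.2 - p.1 * x.2 ∈ affT A 0
    exact sub_mem (Submodule.subset_span ⟨x.1 * p.2, [], rfl, rfl⟩)
      (Submodule.subset_span ⟨p.1 * x.2, [], rfl, rfl⟩)
  | succ m ih =>
    rw [LieModule.lowerCentralSeries_succ, LieSubmodule.lie_le_iff]
    intro x _ p hp
    obtain ⟨hp1, hp2⟩ := ih hp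
    refine ⟨rfl, ?_⟩
    show x.1 * p.2 - p.1 * x.2 ∈ affT A (m + 1)
    rw [hp1, zero_mul, sub_zero]
    exact mul_mem_affT A x.1 hp2

theorem stmt6' :
      (@LieRing.IsNilpotent (A × A) _ ↔
        ∃ n : ℕ, ∀ (a : A) (l : List A), l.length = n → l.foldl (· * ·) a = 0) := by
  refine Iff.trans (LieModule.isNilpotent_iff ℝ (L := A × A) (M := A × A)) ?_
  constructor
  · rintro ⟨k, hk⟩
    refine ⟨k, fun a l hl => ?_⟩
    have := fold_mem_lcs A l a
    rw [hl, hk, LieSubmodule.mem_bot] at this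
    simpa using congrArg Prod.snd this
  · rintro ⟨n, hn⟩
    refine ⟨n + 1, le_antisymm (le_trans (lcs_le_affS A n) ?_) bot_le⟩
    intro p hp
    obtain ⟨hp1, hp2⟩ := hp
    have hT : affT A n ≤ ⊥ := by
      rw [affT, Submodule.span_le]
      rintro z ⟨a, l, hl, rfl⟩
      simp [hn a l hl]
    rw [LieSubmodule.mem_bot]
    have := hT hp2
    rw [Submodule.mem_bot] at this
    exact Prod.ext hp1 this



end Aff

/-- For a finite-dimensional commutative (nonunital) associative real algebra `A`,
`aff(A) = A ⊕ A` with bracket `[(x,y),(x',y')] = (0, x⬝y' - x'⬝y)` is a Lie algebra,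
which is nilpotent iff `A` is nilpotent as an associative algebra. -/
theorem stmt6 (A : Type*) [NonUnitalCommRing A] [Module ℝ A]
    [SMulCommClass ℝ A A] [IsScalarTower ℝ A A] [Module.Finite ℝ A] :
    ∃ (instLR : LieRing (A × A)) (instLA : @LieAlgebra ℝ (A × A) _ instLR),
      instLR.toAddCommGroup = Prod.instAddCommGroup ∧
      HEq instLA.toModule (Prod.instModule : Module ℝ (A × A)) ∧
      (∀ p q : A × A, @Bracket.bracket (A × A) (A × A) instLR.toBracket p q
          = (0, p.1 * q.2 - q.1 * p.2)) ∧
      (@LieRing.IsNilpotent (A × A) instLR ↔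
        ∃ n : ℕ, ∀ (a : A) (l : List A), l.length = n → l.foldl (· * ·) a = 0) := by
  exact ⟨affLR A, affLA A, rfl, HEq.rfl, fun p q => rfl, stmt6' A⟩
end

section
/- Let \mathfrak{g} be a finite-dimensional real Lie algebra with an abelian complex structure J such that the sum \mathfrak{h} = [\mathfrak{g},\mathfrak{g}] + J[\mathfrak{g},\mathfrak{g}] is an abelian ideal. Let \Omega be a closed 2-form on \mathfrak{g} (d\Omega = 0 in the Chevalley–Eilenberg complex). Then for all X \in \mathfrak{g} and all Y, Z \in \mathfrak{h}, one has \Omega([X,JY],JZ) = -\Omega([X,Y],Z). -/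
/-- If `J` is abelian and `𝔥 = 𝔤¹ + J𝔤¹` is an abelian ideal, then for any closed
2-form `Ω`, `Ω([X,JY],JZ) = -Ω([X,Y],Z)` for `Y, Z ∈ 𝔥`. -/
theorem stmt8 (g : Type*) [LieRing g] [LieAlgebra ℝ g] [Module.Finite ℝ g]
    (J : g →ₗ[ℝ] g) (hJ2 : ∀ x : g, J (J x) = -x)
    (hab : ∀ X Y : g, ⁅J X, J Y⁆ = ⁅X, Y⁆)
    (inH : g → Prop)
    (hHdef : ∀ z : g, inH z ↔ ∃ a ∈ LieAlgebra.derivedSeries ℝ g 1,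
      ∃ b ∈ LieAlgebra.derivedSeries ℝ g 1, z = a + J b)
    (habH : ∀ y z : g, inH y → inH z → ⁅y, z⁆ = 0)
    (hidH : ∀ x y : g, inH y → inH ⁅x, y⁆)
    (Ω : g →ₗ[ℝ] g →ₗ[ℝ] ℝ)
    (hskew : ∀ X Y : g, Ω X Y = -Ω Y X)
    (hclosed : ∀ X Y Z : g, Ω ⁅X, Y⁆ Z + Ω ⁅Y, Z⁆ X + Ω ⁅Z, X⁆ Y = 0) :
    ∀ (X Y Z : g), inH Y → inH Z → Ω ⁅X, J Y⁆ (J Z) = -Ω ⁅X, Y⁆ Z := by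
  -- 𝔥 is J-invariant
  have hJH : ∀ z : g, inH z → inH (J z) := by
    intro z hz
    rcases (hHdef z).1 hz with ⟨a, ha, b, hb, rfl⟩
    rw [hHdef]
    refine ⟨-b, neg_mem hb, a, ha, ?_⟩
    rw [map_add, hJ2]
    abel
  -- symmetry of Ω(⁅X,·⁆, ·) on 𝔥
  have hsym : ∀ X Y Z : g, inH Y → inH Z → Ω ⁅X, Y⁆ Z = Ω ⁅X, Z⁆ Y := by
    intro X Y Z hY hZ
    have h := hclosed X Y Z
    rw [habH Y Z hY hZ, map_zero, LinearMap.zero_apply] at h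
    have hlie : ⁅Z, X⁆ = -⁅X, Z⁆ := (lie_skew Z X).symm
    rw [hlie, map_neg, LinearMap.neg_apply] at h
    linarith
  intro X Y Z hY hZ
  -- ⁅X, J Y⁆ = -⁅J X, Y⁆
  have h1 : ⁅X, J Y⁆ = -⁅J X, Y⁆ := by
    have := hab (J X) Y
    rw [hJ2, neg_lie] at this
    exact neg_eq_iff_eq_neg.mp this
  -- closedness applied to (J X, Y, J Z)
  have h2 := hclosed (J X) Y (J Z)
  rw [habH Y (J Z) hY (hJH Z hZ), map_zero, LinearMap.zero_apply, hab] at h2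
  have hlie2 : ⁅Z, X⁆ = -⁅X, Z⁆ := (lie_skew Z X).symm
  rw [hlie2, map_neg, LinearMap.neg_apply] at h2
  have h3 : Ω ⁅J X, Y⁆ (J Z) = Ω ⁅X, Z⁆ Y := by linarith
  rw [h1, map_neg, LinearMap.neg_apply, h3, hsym X Z Y hZ hY]
end

section
/- Let \mathfrak{g} be a finite-dimensional real Lie algebra, J an abelian complex structure on \mathfrak{g}, and \Omega a closed 2-form. Suppose \mathfrak{h} = [\mathfrak{g},\mathfrak{g}] + J[\mathfrak{g},\mathfrak{g}] is an abelian ideal. Then for every X \in \mathfrak{g} and Y \in \mathfrak{h}, \Omega([X,Y],[JX,Y]) = 0, and consequently \Omega([X,JY], J[X,JY]) = 0. -/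
/-- If `J` is abelian and `𝔥 = 𝔤¹ + J𝔤¹` is an abelian ideal, then for any closed
2-form `Ω`, `Ω([X,Y],[JX,Y]) = 0` and `Ω([X,JY], J[X,JY]) = 0` for `Y ∈ 𝔥`. -/
theorem stmt9 (g : Type*) [LieRing g] [LieAlgebra ℝ g] [Module.Finite ℝ g]
    (J : g →ₗ[ℝ] g) (hJ2 : ∀ x : g, J (J x) = -x)
    (hab : ∀ X Y : g, ⁅J X, J Y⁆ = ⁅X, Y⁆)
    (inH : g → Prop)
    (hHdef : ∀ z : g, inH z ↔ ∃ a ∈ LieAlgebra.derivedSeries ℝ g 1,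
      ∃ b ∈ LieAlgebra.derivedSeries ℝ g 1, z = a + J b)
    (habH : ∀ y z : g, inH y → inH z → ⁅y, z⁆ = 0)
    (hidH : ∀ x y : g, inH y → inH ⁅x, y⁆)
    (Ω : g →ₗ[ℝ] g →ₗ[ℝ] ℝ)
    (hskew : ∀ X Y : g, Ω X Y = -Ω Y X)
    (hclosed : ∀ X Y Z : g, Ω ⁅X, Y⁆ Z + Ω ⁅Y, Z⁆ X + Ω ⁅Z, X⁆ Y = 0) :
    ∀ (X Y : g), inH Y →
      Ω ⁅X, Y⁆ ⁅J X, Y⁆ = 0 ∧ Ω ⁅X, J Y⁆ (J ⁅X, J Y⁆) = 0 := by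
  -- every bracket lies in the derived subalgebra, hence in 𝔥
  have hbr : ∀ a b : g, inH ⁅a, b⁆ := by
    intro a b
    refine (hHdef _).mpr ⟨⁅a, b⁆, ?_, 0, ?_, by simp⟩
    · rw [LieAlgebra.derivedSeries_def, LieAlgebra.derivedSeriesOfIdeal_succ,
        LieAlgebra.derivedSeriesOfIdeal_zero]
      exact LieSubmodule.lie_mem_lie (LieSubmodule.mem_top _) (LieSubmodule.mem_top _)
    · exact (LieAlgebra.derivedSeries ℝ g 1).zero_mem
  -- 𝔥 is J-invariant
  have hJH : ∀ y : g, inH y → inH (J y) := by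
    intro y hy
    obtain ⟨a, ha, b, hb, rfl⟩ := (hHdef y).mp hy
    exact (hHdef _).mpr ⟨-b, neg_mem hb, a, ha, by rw [map_add, hJ2]; abel⟩
  -- key identity for abelian complex structures
  have iden : ∀ U V : g, ⁅J U, V⁆ = -⁅U, J V⁆ := by
    intro U V
    have h := hab U (J V)
    rw [hJ2, lie_neg] at h
    rw [← h, neg_neg]
  -- Part 1
  have part1 : ∀ X Y : g, inH Y → Ω ⁅X, Y⁆ ⁅J X, Y⁆ = 0 := by
    intro X Y hY
    have e1 := hclosed X Y ⁅J X, Y⁆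
    rw [habH Y ⁅J X, Y⁆ hY (hidH _ _ hY)] at e1
    have e2 := hclosed (J X) Y ⁅X, Y⁆
    rw [habH Y ⁅X, Y⁆ hY (hbr X Y)] at e2
    -- Jacobi: ⁅X,⁅JX,Y⁆⁆ = ⁅JX,⁅X,Y⁆⁆ since ⁅⁅X,JX⁆,Y⁆ = 0
    have h0 : ⁅(⁅X, J X⁆ : g), Y⁆ = 0 := by
      rw [← lie_skew, habH Y ⁅X, J X⁆ hY (hbr X (J X)), neg_zero]
    have jac : ⁅X, ⁅J X, Y⁆⁆ = ⁅J X, ⁅X, Y⁆⁆ := by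
      have h := leibniz_lie X (J X) Y
      rw [h0] at h
      simpa using h
    have r1 : (⁅(⁅J X, Y⁆ : g), X⁆ : g) = -⁅J X, ⁅X, Y⁆⁆ := by
      rw [← lie_skew, jac]
    have r2 : (⁅(⁅X, Y⁆ : g), J X⁆ : g) = -⁅J X, ⁅X, Y⁆⁆ := by
      rw [← lie_skew]
    rw [r1] at e1
    rw [r2] at e2
    simp only [map_zero, LinearMap.zero_apply, map_neg, LinearMap.neg_apply] at e1 e2
    have hs := hskew ⁅J X, Y⁆ ⁅X, Y⁆
    linarith
  intro X Y hY
  refine ⟨part1 X Y hY, ?_⟩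
  have hJY : inH (J Y) := hJH Y hY
  have hA : inH ⁅X, J Y⁆ := hidH X (J Y) hJY
  have hJA : inH (J ⁅X, J Y⁆) := hJH _ hA
  set A : g := ⁅X, J Y⁆ with hAdef
  -- part1 applied to JY, using abelianness
  have p1' : Ω A ⁅X, Y⁆ = 0 := by
    have := part1 X (J Y) hJY
    rwa [hab X Y] at this
  have e1 := hclosed X (J Y) (J A)
  have z1 : ⁅J Y, J A⁆ = 0 := by rw [hab]; exact habH Y A hY hA
  rw [z1] at e1
  have r : (⁅J A, X⁆ : g) = ⁅J X, A⁆ := by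
    rw [iden A X]; exact lie_skew (J X) A
  rw [r] at e1
  have e2 := hclosed (J X) A (J Y)
  have z2 : ⁅A, J Y⁆ = 0 := by
    have h := iden A Y
    rw [habH _ _ hJA hY] at h
    rw [← neg_neg (⁅A, J Y⁆ : g), ← h, neg_zero]
  rw [z2, hab Y X, ← lie_skew Y X] at e2
  simp only [map_zero, LinearMap.zero_apply, map_neg, LinearMap.neg_apply] at e1 e2
  rw [← hAdef] at e1
  have hs := hskew ⁅X, Y⁆ A
  linarith
end

section
/- Let \mathfrak{g} be a finite-dimensional real unimodular Lie algebra with an abelian complex structure J such that \mathfrak{h} = [\mathfrak{g},\mathfrak{g}] + J[\mathfrak{g},\mathfrak{g}] is a proper abelian ideal. If \mathfrak{g} admits a symplectic form \Omega taming J (i.e. a closed nondegenerate 2-form with \Omega(X,JX) > 0 for all X \neq 0), then [\mathfrak{g}, \mathfrak{h}] = 0; in particular \mathfrak{g} is nilpotent (2-step). -/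
/-- Let `𝔤` be unimodular with an abelian complex structure `J` such that
`𝔥 = 𝔤¹ + J𝔤¹` is a proper abelian ideal. If `𝔤` admits a symplectic form taming
`J`, then `[𝔤, 𝔥] = 0`; in particular `𝔤` is nilpotent. -/
theorem stmt10 (g : Type*) [LieRing g] [LieAlgebra ℝ g] [Module.Finite ℝ g]
    (hunimod : ∀ X : g, LinearMap.trace ℝ g (LieAlgebra.ad ℝ g X) = 0)
    (J : g →ₗ[ℝ] g) (hJ2 : ∀ x : g, J (J x) = -x)
    (hab : ∀ X Y : g, ⁅J X, J Y⁆ = ⁅X, Y⁆)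
    (inH : g → Prop)
    (hHdef : ∀ z : g, inH z ↔ ∃ a ∈ LieAlgebra.derivedSeries ℝ g 1,
      ∃ b ∈ LieAlgebra.derivedSeries ℝ g 1, z = a + J b)
    (habH : ∀ y z : g, inH y → inH z → ⁅y, z⁆ = 0)
    (hidH : ∀ x y : g, inH y → inH ⁅x, y⁆)
    (hproper : ∃ x : g, ¬ inH x)
    (Ω : g →ₗ[ℝ] g →ₗ[ℝ] ℝ)
    (hskew : ∀ X Y : g, Ω X Y = -Ω Y X)
    (hclosed : ∀ X Y Z : g, Ω ⁅X, Y⁆ Z + Ω ⁅Y, Z⁆ X + Ω ⁅Z, X⁆ Y = 0)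
    (hnondeg : ∀ X : g, (∀ Y : g, Ω X Y = 0) → X = 0)
    (htame : ∀ X : g, X ≠ 0 → 0 < Ω X (J X)) :
    (∀ X Y : g, inH Y → ⁅X, Y⁆ = 0) ∧ LieRing.IsNilpotent g := by
  -- H is J-invariant
  have hHJ : ∀ z : g, inH z → inH (J z) := by
    intro z hz
    rw [hHdef] at hz ⊢
    obtain ⟨a, ha, b, hb, rfl⟩ := hz
    refine ⟨-b, neg_mem hb, a, ha, ?_⟩
    rw [map_add, hJ2]
    abel
  -- elements of the derived algebra are in H
  have hg1H : ∀ z : g, z ∈ LieAlgebra.derivedSeries ℝ g 1 → inH z := by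
    intro z hz
    rw [hHdef]
    exact ⟨z, hz, 0, (LieAlgebra.derivedSeries ℝ g 1).zero_mem, by simp⟩
  have hbrH : ∀ x y : g, inH ⁅x, y⁆ := fun x y =>
    hg1H _ (LieSubmodule.lie_mem_lie (LieSubmodule.mem_top x) (LieSubmodule.mem_top y))
  -- bracket identity from the abelian complex structure
  have hJbr : ∀ x w : g, ⁅x, J w⁆ = -⁅J x, w⁆ := by
    intro x w
    have h := hab x (J w)
    rw [hJ2, lie_neg] at h
    exact h.symm
  -- symmetry of Ω ⁅x, ·⁆ · on H
  have hsym : ∀ x u v : g, inH u → inH v → Ω ⁅x, u⁆ v = Ω ⁅x, v⁆ u := by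
    intro x u v hu hv
    have h1 := hclosed x u v
    rw [habH u v hu hv, map_zero, LinearMap.zero_apply] at h1
    have h2 : ⁅v, x⁆ = -⁅x, v⁆ := by rw [← lie_skew]
    rw [h2, map_neg, LinearMap.neg_apply] at h1
    linarith
  -- main claim
  have key : ∀ x y : g, inH y → ⁅x, y⁆ = 0 := by
    intro x y hy
    by_contra hne
    have huH : inH ⁅x, y⁆ := hidH x y hy
    have hvH : inH ⁅J x, y⁆ := hidH (J x) y hy
    -- Jacobi swap using that ⁅x, J x⁆ ∈ H and H is abelian
    have hswap : ⁅x, ⁅J x, y⁆⁆ = ⁅J x, ⁅x, y⁆⁆ := by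
      have hj : ⁅⁅x, J x⁆, y⁆ = 0 := habH _ y (hbrH x (J x)) hy
      have hl := leibniz_lie x (J x) y
      rw [hj, zero_add] at hl
      exact hl
    -- Ω ⁅x,y⁆ ⁅Jx,y⁆ = 0
    have h1 : Ω ⁅x, y⁆ ⁅J x, y⁆ = 0 := by
      have a1 : Ω ⁅x, y⁆ ⁅J x, y⁆ = Ω ⁅x, ⁅J x, y⁆⁆ y := hsym x y ⁅J x, y⁆ hy hvH
      have a2 : Ω ⁅J x, ⁅x, y⁆⁆ y = Ω ⁅J x, y⁆ ⁅x, y⁆ := hsym (J x) ⁅x, y⁆ y huH hy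
      rw [hswap, a2] at a1
      have a3 := hskew ⁅x, y⁆ ⁅J x, y⁆
      linarith
    -- Ω ⁅x,y⁆ (J ⁅x,y⁆) = 0
    have h2 : Ω ⁅x, y⁆ (J ⁅x, y⁆) = 0 := by
      have hJu : inH (J ⁅x, y⁆) := hHJ _ huH
      have a1 : Ω ⁅x, y⁆ (J ⁅x, y⁆) = Ω ⁅x, J ⁅x, y⁆⁆ y := hsym x y (J ⁅x, y⁆) hy hJu
      rw [hJbr x ⁅x, y⁆, ← hswap] at a1
      have a2 : Ω ⁅x, ⁅J x, y⁆⁆ y = Ω ⁅x, y⁆ ⁅J x, y⁆ := hsym x ⁅J x, y⁆ y hvH hy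
      rw [map_neg, LinearMap.neg_apply, a2, h1] at a1
      simpa using a1
    exact (htame _ hne).ne' h2
  refine ⟨fun X Y hY => key X Y hY, ?_⟩
  refine (LieModule.isNilpotent_iff ℝ g g).mpr ⟨2, ?_⟩
  rw [show (2:ℕ) = 1 + 1 from rfl, LieModule.lowerCentralSeries_succ, eq_bot_iff,
    LieSubmodule.lie_le_iff]
  intro x _ m hm
  have : inH m := hg1H m hm
  rw [key x m this]
  exact (⊥ : LieSubmodule ℝ g g).zero_mem
end

section
/- Let \mathfrak{g} be a finite-dimensional real Lie algebra with abelian complex structure J, let \mathfrak{h} be an abelian J-invariant ideal, let \Omega be a closed 2-form on \mathfrak{g}, and fix X \in \mathfrak{g}. Then the bilinear forms B_X(Y,Z) = \Omega([X,Y],Z) and B'_X(Y,Z) = \Omega([JX,Y],Z) on \mathfrak{h} are both symmetric, and B'_X(Y,Z) = -B_X(JY,Z) for all Y,Z \in \mathfrak{h}. -/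
/-- For an abelian complex structure `J`, an abelian `J`-invariant ideal `𝔥`, a
closed 2-form `Ω` and a fixed `X`, the forms `B_X(Y,Z)=Ω([X,Y],Z)` and
`B'_X(Y,Z)=Ω([JX,Y],Z)` on `𝔥` are symmetric and `B'_X(Y,Z) = -B_X(JY,Z)`. -/
theorem stmt11 (g : Type*) [LieRing g] [LieAlgebra ℝ g] [Module.Finite ℝ g]
    (J : g →ₗ[ℝ] g) (hJ2 : ∀ x : g, J (J x) = -x)
    (hab : ∀ X Y : g, ⁅J X, J Y⁆ = ⁅X, Y⁆)
    (inH : g → Prop)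
    (habH : ∀ y z : g, inH y → inH z → ⁅y, z⁆ = 0)
    (hidH : ∀ x y : g, inH y → inH ⁅x, y⁆)
    (hJH : ∀ y : g, inH y → inH (J y))
    (Ω : g →ₗ[ℝ] g →ₗ[ℝ] ℝ)
    (hskew : ∀ X Y : g, Ω X Y = -Ω Y X)
    (hclosed : ∀ X Y Z : g, Ω ⁅X, Y⁆ Z + Ω ⁅Y, Z⁆ X + Ω ⁅Z, X⁆ Y = 0)
    (X : g) :
    (∀ Y Z : g, inH Y → inH Z → Ω ⁅X, Y⁆ Z = Ω ⁅X, Z⁆ Y) ∧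
    (∀ Y Z : g, inH Y → inH Z → Ω ⁅J X, Y⁆ Z = Ω ⁅J X, Z⁆ Y) ∧
    (∀ Y Z : g, inH Y → inH Z → Ω ⁅J X, Y⁆ Z = -Ω ⁅X, J Y⁆ Z) := by
  have sym : ∀ W Y Z : g, inH Y → inH Z → Ω ⁅W, Y⁆ Z = Ω ⁅W, Z⁆ Y := by
    intro W Y Z hY hZ
    have h := hclosed W Y Z
    rw [habH Y Z hY hZ] at h
    have h2 : (⁅Z, W⁆ : g) = -⁅W, Z⁆ := (lie_skew Z W).symm
    rw [h2, map_neg, LinearMap.neg_apply] at h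
    simp only [map_zero, LinearMap.zero_apply] at h
    linarith
  refine ⟨fun Y Z hY hZ => sym X Y Z hY hZ,
          fun Y Z hY hZ => sym (J X) Y Z hY hZ, fun Y Z hY hZ => ?_⟩
  have : ⁅J X, Y⁆ = -⁅X, J Y⁆ := by
    conv_lhs => rw [show Y = -J (J Y) by rw [hJ2, neg_neg]]
    rw [lie_neg, hab]
  rw [this, map_neg, LinearMap.neg_apply]
end

section
/- Let \mathfrak{g} be a real Lie algebra that is an abelian double product with respect to an abelian complex structure J, i.e. \mathfrak{g} = \mathfrak{g}^1 \oplus J\mathfrak{g}^1 with \mathfrak{g}^1 = [\mathfrak{g},\mathfrak{g}] and both summands abelian subalgebras. Then the product X \cdot Y := [JX, Y] on \mathfrak{g}^1 is commutative and associative. -/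
/-- If `𝔤 = 𝔤¹ ⊕ J𝔤¹` is an abelian double product for an abelian complex
structure `J`, then the product `X ⬝ Y = [JX, Y]` on `𝔤¹` is commutative and
associative. -/
theorem stmt12 (g : Type*) [LieRing g] [LieAlgebra ℝ g] [Module.Finite ℝ g]
    (J : g →ₗ[ℝ] g) (hJ2 : ∀ x : g, J (J x) = -x)
    (hab : ∀ X Y : g, ⁅J X, J Y⁆ = ⁅X, Y⁆)
    (hsum : ∀ x : g, ∃ a ∈ LieAlgebra.derivedSeries ℝ g 1,
      ∃ b ∈ LieAlgebra.derivedSeries ℝ g 1, x = a + J b)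
    (hdisj : ∀ a ∈ LieAlgebra.derivedSeries ℝ g 1,
      ∀ b ∈ LieAlgebra.derivedSeries ℝ g 1, a + J b = 0 → a = 0 ∧ b = 0)
    (habD : ∀ a ∈ LieAlgebra.derivedSeries ℝ g 1,
      ∀ b ∈ LieAlgebra.derivedSeries ℝ g 1, ⁅a, b⁆ = 0)
    (habJD : ∀ a ∈ LieAlgebra.derivedSeries ℝ g 1,
      ∀ b ∈ LieAlgebra.derivedSeries ℝ g 1, ⁅J a, J b⁆ = 0) :
    ∀ a ∈ LieAlgebra.derivedSeries ℝ g 1, ∀ b ∈ LieAlgebra.derivedSeries ℝ g 1,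
      ∀ c ∈ LieAlgebra.derivedSeries ℝ g 1,
        ⁅J a, b⁆ = ⁅J b, a⁆ ∧ ⁅J ⁅J a, b⁆, c⁆ = ⁅J a, ⁅J b, c⁆⁆ := by
  intro a ha b hb c hc
  -- commutativity for arbitrary elements
  have comm : ∀ X Y : g, ⁅J X, Y⁆ = ⁅J Y, X⁆ := by
    intro X Y
    have h := hab X (J Y)
    rw [hJ2] at h
    simp only [lie_neg] at h
    have : -⁅J X, Y⁆ = -⁅J Y, X⁆ := by rw [h, ← lie_skew]
    exact neg_injective this
  -- left symmetry from habJD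
  have lsym : ∀ x ∈ LieAlgebra.derivedSeries ℝ g 1, ∀ y ∈ LieAlgebra.derivedSeries ℝ g 1,
      ∀ z : g, ⁅J x, ⁅J y, z⁆⁆ = ⁅J y, ⁅J x, z⁆⁆ := by
    intro x hx y hy z
    have h := lie_lie (J x) (J y) z
    rw [habJD x hx y hy, zero_lie] at h
    exact sub_eq_zero.mp h.symm
  refine ⟨comm a b, ?_⟩
  rw [comm ⁅J a, b⁆ c, lsym c hc a ha b, comm c b]
end

section
/- Let \mathfrak{h} and \mathfrak{g} be finite-dimensional real Lie algebras with \mathfrak{g} solvable, and let \rho: \mathfrak{g} \to Der(\mathfrak{h}) be a representation by derivations whose image is nilpotent in End(\mathfrak{h}), and which is not of type (I) (i.e. some \rho(X) has an eigenvalue with nonzero real part). Then there exists a complex-valued character \alpha of \mathfrak{g} with Re(\alpha) \neq 0 such that the generalized weight space V_\alpha(\mathfrak{h}_\mathbb{C}) = \{v \in \mathfrak{h}_\mathbb{C} : \rho_s(X)v = \alpha(X)v \text{ for all } X\} is nonzero and [V_\alpha(\mathfrak{h}_\mathbb{C}), V_{\bar\alpha}(\mathfrak{h}_\mathbb{C})]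 = 0. -/
open TensorProduct Module Set

attribute [local instance 100] LieRing.ofAssociativeRing

open TensorProduct Module Set

/-- Binomial/tensor-trick lemma: a "Leibniz triple" of endomorphisms maps pairs of
generalized eigenvectors to a generalized eigenvector for the sum of eigenvalues. -/
lemma aux_bilin {K V₁ V₂ V₃ : Type*} [Field K] [AddCommGroup V₁] [Module K V₁]
    [AddCommGroup V₂] [Module K V₂] [AddCommGroup V₃] [Module K V₃]
    (g : V₁ →ₗ[K] V₂ →ₗ[K] V₃) (D₁ : Module.End K V₁) (D₂ : Module.End K V₂)
    (D₃ : Module.End K V₃)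
    (hLeib : ∀ m n, D₃ (g m n) = g (D₁ m) n + g m (D₂ n))
    {a b : K} {m : V₁} {n : V₂}
    (hm : m ∈ D₁.maxGenEigenspace a) (hn : n ∈ D₂.maxGenEigenspace b) :
    g m n ∈ D₃.maxGenEigenspace (a + b) := by
  set G : V₁ ⊗[K] V₂ →ₗ[K] V₃ := TensorProduct.lift g
  set f₁ : Module.End K (V₁ ⊗[K] V₂) := (D₁ - a • 1).rTensor V₂
  set f₂ : Module.End K (V₁ ⊗[K] V₂) := (D₂ - b • 1).lTensor V₁
  set F : Module.End K V₃ := D₃ - (a + b) • 1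
  have h_comm_square : F ∘ₗ G = G ∘ₗ (f₁ + f₂) := by
    ext m₁ m₂
    simp only [F, G, f₁, f₂, LinearMap.coe_comp, Function.comp_apply,
      AlgebraTensorModule.curry_apply, TensorProduct.curry_apply,
      LinearMap.coe_restrictScalars, LinearMap.sub_apply, LinearMap.add_apply,
      LinearMap.rTensor_tmul, LinearMap.lTensor_tmul, TensorProduct.lift.tmul,
      LinearMap.smul_apply, Module.End.one_apply]
    rw [hLeib]
    simp only [map_add, map_neg, map_smul, map_sub, add_smul, smul_neg,
      TensorProduct.lift.tmul, LinearMap.map_smul₂, LinearMap.smul_apply, LinearMap.add_apply]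
    abel_nf
    simp only [LinearMap.add_apply, LinearMap.smul_apply]
    abel
  rw [Module.End.mem_maxGenEigenspace] at hm hn ⊢
  obtain ⟨k₁, hk₁⟩ := hm
  obtain ⟨k₂, hk₂⟩ := hn
  have hf_comm : Commute f₁ f₂ := by
    ext m₁ m₂
    simp only [f₁, f₂, Module.End.mul_apply, LinearMap.rTensor_tmul, LinearMap.lTensor_tmul,
      AlgebraTensorModule.curry_apply, TensorProduct.curry_apply,
      LinearMap.coe_restrictScalars]
  have hf₁ : (f₁ ^ k₁) (m ⊗ₜ n) = 0 := by
    simp only [f₁, LinearMap.rTensor_pow, LinearMap.rTensor_tmul, hk₁, zero_tmul]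
  have hf₂ : (f₂ ^ k₂) (m ⊗ₜ n) = 0 := by
    simp only [f₂, LinearMap.lTensor_pow, LinearMap.lTensor_tmul, hk₂, tmul_zero]
  refine ⟨k₁ + k₂, ?_⟩
  have key : ((f₁ + f₂) ^ (k₁ + k₂)) (m ⊗ₜ n) = 0 := by
    rw [hf_comm.add_pow']
    simp only [LinearMap.coe_sum, Finset.sum_apply, LinearMap.smul_apply]
    apply Finset.sum_eq_zero
    rintro ⟨i, j⟩ hij
    suffices (f₁ ^ i * f₂ ^ j) (m ⊗ₜ n) = 0 by rw [this]; apply smul_zero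
    rcases le_or_gt k₁ i with hi | hi
    · rw [(hf_comm.pow_pow i j).eq, Module.End.mul_apply, Module.End.pow_map_zero_of_le hi hf₁,
        LinearMap.map_zero]
    · have hj : k₂ ≤ j := by
        have := Finset.HasAntidiagonal.mem_antidiagonal.mp hij
        omega
      rw [Module.End.mul_apply, Module.End.pow_map_zero_of_le hj hf₂, LinearMap.map_zero]
  have : G (m ⊗ₜ n) = g m n := rfl
  calc ((D₃ - (a + b) • 1) ^ (k₁ + k₂)) (g m n)
      = (F ^ (k₁ + k₂)) (G (m ⊗ₜ n)) := rfl
    _ = G (((f₁ + f₂) ^ (k₁ + k₂)) (m ⊗ₜ n)) := by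
        rw [← LinearMap.comp_apply, Module.End.commute_pow_left_of_commute h_comm_square,
          LinearMap.comp_apply]
    _ = 0 := by rw [key, map_zero]

open TensorProduct Module Set Polynomial

lemma aux_ss {h : Type*} [AddCommGroup h] [Module ℝ h] [FiniteDimensional ℝ h]
    (f : Module.End ℝ h) (hf : f.IsSemisimple) :
    Module.End.IsFinitelySemisimple (LinearMap.baseChange ℂ f) := by
  have hsq : Squarefree (minpoly ℝ f) := hf.minpoly_squarefree
  have hsep : (minpoly ℝ f).Separable := (PerfectField.separable_iff_squarefree).mpr hsq
  have hsq' : Squarefree ((minpoly ℝ f).map (algebraMap ℝ ℂ)) := hsep.map.squarefree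
  have haev : aeval (LinearMap.baseChange ℂ f) ((minpoly ℝ f).map (algebraMap ℝ ℂ)) = 0 := by
    have h1 : aeval (LinearMap.baseChange ℂ f) ((minpoly ℝ f).map (algebraMap ℝ ℂ))
        = aeval (LinearMap.baseChange ℂ f) (minpoly ℝ f) := by
      rw [aeval_map_algebraMap]
    have h2 : LinearMap.baseChange ℂ f = Module.End.baseChangeHom ℝ ℂ h f := rfl
    rw [h1, h2, aeval_algHom_apply, minpoly.aeval, map_zero]
  exact (Module.End.isSemisimple_of_squarefree_aeval_eq_zero hsq' haev).isFinitelySemisimple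

open TensorProduct Module Set

lemma aux_adnil {g h : Type*} [LieRing g] [LieAlgebra ℝ g]
    [LieRing h] [LieAlgebra ℝ h] [FiniteDimensional ℝ h]
    (ρ : g →ₗ⁅ℝ⁆ Module.End ℝ h)
    (hnil : LieRing.IsNilpotent ρ.range) :
    ∃ n : ℕ, ∀ X Y : g,
      ((LieAlgebra.ad ℂ (Module.End ℂ (ℂ ⊗[ℝ] h)) (LinearMap.baseChange ℂ (ρ X))) ^ n)
        (LinearMap.baseChange ℂ (ρ Y)) = 0 := by
  obtain ⟨k, hk⟩ := LieAlgebra.nilpotent_ad_of_nilpotent_algebra ℝ ρ.range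
  refine ⟨k, fun X Y => ?_⟩
  -- transfer through the subalgebra inclusion
  have key₁ : ∀ (j : ℕ) (x y : ρ.range),
      ((LieAlgebra.ad ℝ (Module.End ℝ h) (x : Module.End ℝ h)) ^ j) (y : Module.End ℝ h)
        = (((LieAlgebra.ad ℝ ρ.range x) ^ j) y : Module.End ℝ h) := by
    intro j
    induction j with
    | zero => intro x y; simp
    | succ j ih =>
      intro x y
      rw [pow_succ', pow_succ', Module.End.mul_apply, Module.End.mul_apply,
        LieAlgebra.ad_apply, LieAlgebra.ad_apply, ih]
      exact (LieSubalgebra.coe_bracket _ _ _).symm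
  -- transfer through base change
  set φ := Module.End.baseChangeHom ℝ ℂ h with hφ
  have hbr : ∀ u v : Module.End ℝ h, φ ⁅u, v⁆ = ⁅φ u, φ v⁆ := by
    intro u v
    simp only [Ring.lie_def, map_sub, map_mul]
  have key₂ : ∀ (j : ℕ) (u v : Module.End ℝ h),
      ((LieAlgebra.ad ℂ (Module.End ℂ (ℂ ⊗[ℝ] h)) (φ u)) ^ j) (φ v)
        = φ (((LieAlgebra.ad ℝ (Module.End ℝ h) u) ^ j) v) := by
    intro j
    induction j with
    | zero => intro u v; simp
    | succ j ih =>
      intro u v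
      rw [pow_succ', pow_succ', Module.End.mul_apply, Module.End.mul_apply,
        LieAlgebra.ad_apply, LieAlgebra.ad_apply, ih, ← hbr]
  have hXmem : ρ X ∈ ρ.range := ⟨X, rfl⟩
  have hYmem : ρ Y ∈ ρ.range := ⟨Y, rfl⟩
  have hA : LinearMap.baseChange ℂ (ρ X) = φ (ρ X) := rfl
  have hB : LinearMap.baseChange ℂ (ρ Y) = φ (ρ Y) := rfl
  rw [hA, hB, key₂]
  have := key₁ k ⟨ρ X, hXmem⟩ ⟨ρ Y, hYmem⟩
  rw [show ((⟨ρ X, hXmem⟩ : ρ.range) : Module.End ℝ h) = ρ X from rfl,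
    show ((⟨ρ Y, hYmem⟩ : ρ.range) : Module.End ℝ h) = ρ Y from rfl] at this
  rw [this, hk, LinearMap.zero_apply, ZeroMemClass.coe_zero, map_zero]

@[simp]
lemma aux_restrict_coe_apply {K V : Type*} [CommRing K] [AddCommGroup V] [Module K V]
    {f : Module.End K V} {p : Submodule K V} (hf : Set.MapsTo f p p) (x : p) :
    ((f.restrict hf x : p) : V) = f x :=
  rfl

set_option maxHeartbeats 1000000 in
/-- Let `ρ : 𝔤 → Der(𝔥)` be a representation by derivations of a solvable Lie
algebra with nilpotent image, not of type (I). Then there is a character `α` with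
`Re α ≠ 0`, a nonzero weight vector for `α` in `𝔥_ℂ`, and
`[V_α(𝔥_ℂ), V_ᾱ(𝔥_ℂ)] = 0`. -/
theorem stmt14 (g h : Type*) [LieRing g] [LieAlgebra ℝ g] [LieAlgebra.IsSolvable g]
    [Module.Finite ℝ g] [LieRing h] [LieAlgebra ℝ h] [FiniteDimensional ℝ h]
    (ρ : g →ₗ⁅ℝ⁆ Module.End ℝ h)
    (hder : ∀ (X : g) (a b : h), ρ X ⁅a, b⁆ = ⁅ρ X a, b⁆ + ⁅a, ρ X b⁆)
    (hnil : LieRing.IsNilpotent ρ.range)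
    (ρs : g → Module.End ℝ h)
    (hss : ∀ X : g, (ρs X).IsSemisimple)
    (hn : ∀ X : g, IsNilpotent (ρ X - ρs X))
    (hcomm : ∀ X : g, Commute (ρs X) (ρ X - ρs X))
    (hnotI : ∃ (X : g) (μ : ℂ), μ.re ≠ 0 ∧
      Module.End.HasEigenvalue (LinearMap.baseChange ℂ (ρ X)) μ) :
    ∃ α : g →ₗ[ℝ] ℂ, (∀ X Y : g, α ⁅X, Y⁆ = 0) ∧ (∃ X : g, (α X).re ≠ 0) ∧
      (∃ v : ℂ ⊗[ℝ] h, v ≠ 0 ∧ ∀ X : g, LinearMap.baseChange ℂ (ρs X) v = α X • v) ∧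
      (∀ v w : ℂ ⊗[ℝ] h, (∀ X : g, LinearMap.baseChange ℂ (ρs X) v = α X • v) →
        (∀ X : g, LinearMap.baseChange ℂ (ρs X) w = (starRingEnd ℂ) (α X) • w) →
        ⁅v, w⁆ = 0) := by
  classical
  obtain ⟨X₀, μ, hμre, hμ⟩ := hnotI
  set A : g → Module.End ℂ (ℂ ⊗[ℝ] h) := fun X => LinearMap.baseChange ℂ (ρ X) with hA
  set S : g → Module.End ℂ (ℂ ⊗[ℝ] h) := fun X => LinearMap.baseChange ℂ (ρs X) with hS
  set φbc := Module.End.baseChangeHom ℝ ℂ h with hφbc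
  have hAφ : ∀ X, A X = φbc (ρ X) := fun X => rfl
  have hSφ : ∀ X, S X = φbc (ρs X) := fun X => rfl
  -- basic facts about `S`
  have hSfs : ∀ X, Module.End.IsFinitelySemisimple (S X) := fun X => aux_ss _ (hss X)
  have hNnil : ∀ X, IsNilpotent (A X - S X) := by
    intro X
    have heq : A X - S X = φbc (ρ X - ρs X) := by rw [map_sub, hAφ, hSφ]
    rw [heq]
    exact (hn X).map φbc
  have hρcomm : ∀ X, Commute (ρ X) (ρs X) := by
    intro X
    have h2 : Commute (ρs X) (ρ X) := by
      simpa using (hcomm X).add_right (Commute.refl (ρs X))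
    exact h2.symm
  have hASc : ∀ X, Commute (A X) (S X) := by
    intro X
    have : φbc (ρ X * ρs X) = φbc (ρs X * ρ X) := by rw [(hρcomm X).eq]
    exact (show A X * S X = S X * A X by simpa only [map_mul, ← hAφ, ← hSφ] using this)
  have hSNc : ∀ X, Commute (S X) (A X - S X) := by
    intro X
    have : φbc (ρs X * (ρ X - ρs X)) = φbc ((ρ X - ρs X) * ρs X) := by rw [(hcomm X).eq]
    exact (show S X * (A X - S X) = (A X - S X) * S X by
      simpa only [map_mul, map_sub, ← hAφ, ← hSφ] using this)
  -- `S X` acts as the scalar `φ` on the generalized `φ`-eigenspace of `A X`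
  have hscal : ∀ (X : g) (c : ℂ) (m : ℂ ⊗[ℝ] h),
      m ∈ (A X).maxGenEigenspace c → S X m = c • m := by
    intro X c m hm
    exact Module.End.apply_eq_of_mem_of_comm_of_isFinitelySemisimple_of_isNil hm
      (hASc X) (hSfs X) (hNnil X)
  -- eigenvectors of all the `S X` lie in generalized eigenspaces of the `A X`
  have hmemmax : ∀ (X : g) (c : ℂ) (u : ℂ ⊗[ℝ] h),
      S X u = c • u → u ∈ (A X).maxGenEigenspace c := by
    intro X c u hu
    obtain ⟨k, hk⟩ := hNnil X
    rw [Module.End.mem_maxGenEigenspace]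
    refine ⟨k, ?_⟩
    have hSpow : ∀ j : ℕ, S X (((A X - S X) ^ j) u) = c • ((A X - S X) ^ j) u := by
      intro j
      have h1 : S X * (A X - S X) ^ j = (A X - S X) ^ j * S X := ((hSNc X).pow_right j).eq
      calc S X (((A X - S X) ^ j) u) = (S X * (A X - S X) ^ j) u := rfl
        _ = ((A X - S X) ^ j) (S X u) := by rw [h1]; rfl
        _ = c • ((A X - S X) ^ j) u := by rw [hu, map_smul]
    have key : ∀ j : ℕ, ((A X - c • 1) ^ j) u = ((A X - S X) ^ j) u := by
      intro j
      induction j with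
      | zero => rfl
      | succ j ih =>
        rw [pow_succ', pow_succ', Module.End.mul_apply, Module.End.mul_apply, ih]
        simp only [LinearMap.sub_apply, LinearMap.smul_apply, Module.End.one_apply, hSpow j]
    rw [key k, hk, LinearMap.zero_apply]
  -- invariance of generalized eigenspaces from nilpotency of the image of `ρ`
  obtain ⟨n, hadn⟩ := aux_adnil ρ hnil
  have hmaps : ∀ X Y c, Set.MapsTo (A Y)
      ((A X).maxGenEigenspace c) ((A X).maxGenEigenspace c) := by
    intro X Y c m hm
    have hY : A Y ∈ (LieAlgebra.ad ℂ (Module.End ℂ (ℂ ⊗[ℝ] h)) (A X)).maxGenEigenspace 0 := by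
      rw [Module.End.mem_maxGenEigenspace]
      exact ⟨n, by simpa using hadn X Y⟩
    set g0 : Module.End ℂ (ℂ ⊗[ℝ] h) →ₗ[ℂ] ((ℂ ⊗[ℝ] h) →ₗ[ℂ] (ℂ ⊗[ℝ] h)) :=
      LinearMap.id with hg0
    have hleib : ∀ (B : Module.End ℂ (ℂ ⊗[ℝ] h)) (w : ℂ ⊗[ℝ] h),
        A X (g0 B w)
          = g0 (LieAlgebra.ad ℂ (Module.End ℂ (ℂ ⊗[ℝ] h)) (A X) B) w
            + g0 B (A X w) := by
      intro B w
      simp only [hg0, LinearMap.id_apply, LieAlgebra.ad_apply, Ring.lie_def,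
        LinearMap.sub_apply, Module.End.mul_apply]
      abel
    have := aux_bilin g0 (LieAlgebra.ad ℂ (Module.End ℂ (ℂ ⊗[ℝ] h)) (A X))
      (A X) (A X) hleib hY hm
    simpa [hg0] using this
  -- bracket compatibility
  have hLieb : ∀ (X : g) (u v : ℂ ⊗[ℝ] h), A X ⁅u, v⁆ = ⁅A X u, v⁆ + ⁅u, A X v⁆ := by
    intro X u v
    have z1 : ∀ m : ℂ ⊗[ℝ] h, ⁅(0 : ℂ ⊗[ℝ] h), m⁆ = 0 := fun m => zero_lie m
    have z2 : ∀ m : ℂ ⊗[ℝ] h, ⁅m, (0 : ℂ ⊗[ℝ] h)⁆ = 0 := fun m => lie_zero m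
    have z3 : ∀ m₁ m₂ m : ℂ ⊗[ℝ] h, ⁅m₁ + m₂, m⁆ = ⁅m₁, m⁆ + ⁅m₂, m⁆ :=
      fun m₁ m₂ m => add_lie m₁ m₂ m
    have z4 : ∀ m m₁ m₂ : ℂ ⊗[ℝ] h, ⁅m, m₁ + m₂⁆ = ⁅m, m₁⁆ + ⁅m, m₂⁆ :=
      fun m m₁ m₂ => lie_add m m₁ m₂
    induction u using TensorProduct.induction_on with
    | zero => simp only [z1, map_zero, add_zero, zero_add]
    | add u₁ u₂ h₁ h₂ => simp only [z3, map_add, h₁, h₂]; abel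
    | tmul x a =>
      induction v using TensorProduct.induction_on with
      | zero => simp only [z2, map_zero, add_zero, zero_add]
      | add v₁ v₂ h₁ h₂ => simp only [z4, map_add, h₁, h₂]; abel
      | tmul y b =>
        have h1 : ⁅x ⊗ₜ[ℝ] a, y ⊗ₜ[ℝ] b⁆ = (x * y) ⊗ₜ[ℝ] ⁅a, b⁆ :=
          LieAlgebra.ExtendScalars.bracket_tmul _ _ _ _ x y a b
        have h2 : A X (x ⊗ₜ[ℝ] a) = x ⊗ₜ (ρ X a) := rfl
        have h3 : A X (y ⊗ₜ[ℝ] b) = y ⊗ₜ (ρ X b) := rfl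
        rw [h1, h2, h3, LieAlgebra.ExtendScalars.bracket_tmul _ _ _ _,
          LieAlgebra.ExtendScalars.bracket_tmul _ _ _ _]
        have h4 : A X ((x * y) ⊗ₜ[ℝ] ⁅a, b⁆) = (x * y) ⊗ₜ (ρ X ⁅a, b⁆) := rfl
        rw [h4, hder X a b, tmul_add]
  have hbr : ∀ (X : g) (a b : ℂ) (u v : ℂ ⊗[ℝ] h),
      u ∈ (A X).maxGenEigenspace a → v ∈ (A X).maxGenEigenspace b →
      ⁅u, v⁆ ∈ (A X).maxGenEigenspace (a + b) := by
    intro X a b u v hu hv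
    exact aux_bilin (LinearMap.mk₂ ℂ (fun m n => ⁅m, n⁆) add_lie smul_lie lie_add lie_smul)
      (A X) (A X) (A X) (fun m n => by
        simp only [LinearMap.mk₂_apply]
        exact hLieb X m n) hu hv
  -- simultaneous generalized eigenspace decomposition
  have htop : ⨆ χ : g → ℂ, ⨅ X, (A X).maxGenEigenspace (χ X) = ⊤ :=
    Module.End.iSup_iInf_maxGenEigenspace_eq_top_of_forall_mapsTo A
      (fun i j c => hmaps j i c)
      (fun X => Module.End.iSup_maxGenEigenspace_eq_top (A X))
  -- there is a weight `χ` with `χ X₀ = μ`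
  set P : Set (g → ℂ) := {χ | (⨅ X, (A X).maxGenEigenspace (χ X)) ≠ ⊥} with hP
  have hex : ∃ χ : g → ℂ, χ ∈ P ∧ χ X₀ = μ := by
    by_contra hcon
    push_neg at hcon
    have hle : (⊤ : Submodule ℂ (ℂ ⊗[ℝ] h)) ≤
        ⨆ (ν : ℂ) (_ : ν ≠ μ), (A X₀).maxGenEigenspace ν := by
      rw [← htop]
      refine iSup_le fun χ => ?_
      rcases eq_or_ne (⨅ X, (A X).maxGenEigenspace (χ X)) ⊥ with hb | hb
      · rw [hb]; exact bot_le
      · refine le_trans (iInf_le _ X₀) ?_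
        exact le_iSup₂ (f := fun (ν : ℂ) (_ : ν ≠ μ) => (A X₀).maxGenEigenspace ν)
          (χ X₀) (hcon χ hb)
    have hdisj : Disjoint ((A X₀).maxGenEigenspace μ)
        (⨆ (ν : ℂ) (_ : ν ≠ μ), (A X₀).maxGenEigenspace ν) :=
      (Module.End.independent_maxGenEigenspace (A X₀)) μ
    have hbot : (A X₀).maxGenEigenspace μ = ⊥ :=
      hdisj.eq_bot_of_le (le_trans le_top hle)
    obtain ⟨v, hv, hv0⟩ := hμ.exists_hasEigenvector
    have : v ∈ (A X₀).maxGenEigenspace μ := by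
      rw [Module.End.mem_maxGenEigenspace]
      refine ⟨1, ?_⟩
      have hv' : LinearMap.baseChange ℂ (ρ X₀) v = μ • v := Module.End.mem_eigenspace_iff.mp hv
      simp only [pow_one, LinearMap.sub_apply, LinearMap.smul_apply, Module.End.one_apply]
      rw [show A X₀ v = μ • v from hv', sub_self]
    rw [hbot] at this
    exact hv0 (by simpa using this)
  obtain ⟨χμ, hχμP, hχμval⟩ := hex
  -- every weight value at `X₀` is an eigenvalue of `A X₀`
  have hPval : ∀ χ ∈ P, (A X₀).HasEigenvalue (χ X₀) := by
    intro χ hχ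
    have h1 : (A X₀).maxGenEigenspace (χ X₀) ≠ ⊥ := by
      intro hb
      exact hχ (le_bot_iff.mp (hb ▸ iInf_le (fun X => (A X).maxGenEigenspace (χ X)) X₀))
    rw [Module.End.maxGenEigenspace_eq_genEigenspace_finrank] at h1
    exact Module.End.hasEigenvalue_of_hasGenEigenvalue (k := finrank ℂ (ℂ ⊗[ℝ] h)) h1
  -- finiteness of eigenvalues and choice of an extremal weight
  have hev_fin : {z : ℂ | (A X₀).HasEigenvalue z}.Finite := by
    have hne : minpoly ℂ (A X₀) ≠ 0 := minpoly.ne_zero (Algebra.IsIntegral.isIntegral _)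
    refine Set.Finite.subset (Polynomial.finite_setOf_isRoot hne) ?_
    intro z hz
    exact (Module.End.hasEigenvalue_iff_isRoot).mp hz
  set T : Set ℝ := (fun χ : g → ℂ => |(χ X₀).re|) '' P with hT
  have hTfin : T.Finite := by
    refine Set.Finite.subset (hev_fin.image (fun z => |z.re|)) ?_
    rintro t ⟨χ, hχ, rfl⟩
    exact ⟨χ X₀, hPval χ hχ, rfl⟩
  have hμT : |μ.re| ∈ T := ⟨χμ, hχμP, by dsimp only; rw [hχμval]⟩
  have hTne : T.Nonempty := ⟨|μ.re|, hμT⟩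
  obtain ⟨t0, ht0T, hmax⟩ := Set.exists_max_image T id hTfin hTne
  obtain ⟨χs, hχsP, hχst⟩ := ht0T
  have ha0pos : 0 < |(χs X₀).re| := by
    have h1 : |μ.re| ≤ t0 := by simpa using hmax _ hμT
    have h2 : 0 < |μ.re| := abs_pos.mpr hμre
    have hχst' : |(χs X₀).re| = t0 := hχst
    rw [hχst']
    exact lt_of_lt_of_le h2 h1
  -- the weight space
  set W : Submodule ℂ (ℂ ⊗[ℝ] h) := ⨅ X, (A X).maxGenEigenspace (χs X) with hW
  have hWne : W ≠ ⊥ := hχsP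
  have hmemW : ∀ (m : ℂ ⊗[ℝ] h), m ∈ W ↔ ∀ X, m ∈ (A X).maxGenEigenspace (χs X) := by
    intro m; exact Submodule.mem_iInf _
  have hWmaps : ∀ Y, Set.MapsTo (A Y) (W : Set (ℂ ⊗[ℝ] h)) (W : Set (ℂ ⊗[ℝ] h)) := by
    intro Y m hm
    rw [SetLike.mem_coe, hmemW] at hm ⊢
    exact fun X => hmaps X Y (χs X) (hm X)
  haveI : Nontrivial W := Submodule.nontrivial_iff_ne_bot.mpr hWne
  have hd : 0 < finrank ℂ W := finrank_pos
  have hdC : ((finrank ℂ W : ℂ)) ≠ 0 := Nat.cast_ne_zero.mpr hd.ne'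
  -- traces
  have htr : ∀ X, LinearMap.trace ℂ W ((A X).restrict (hWmaps X))
      = (finrank ℂ W : ℂ) * χs X := by
    intro X
    have hmt : Set.MapsTo (A X - algebraMap ℂ (Module.End ℂ (ℂ ⊗[ℝ] h)) (χs X))
        (W : Set (ℂ ⊗[ℝ] h)) (W : Set (ℂ ⊗[ℝ] h)) := by
      intro m hm
      rw [SetLike.mem_coe] at hm ⊢
      have h1 : (A X - algebraMap ℂ (Module.End ℂ (ℂ ⊗[ℝ] h)) (χs X)) m
          = A X m - χs X • m := by
        simp [Module.algebraMap_end_apply]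
      rw [h1]
      exact sub_mem (hWmaps X hm) (Submodule.smul_mem _ _ hm)
    have halg : Set.MapsTo (algebraMap ℂ (Module.End ℂ (ℂ ⊗[ℝ] h)) (χs X))
        (W : Set (ℂ ⊗[ℝ] h)) (W : Set (ℂ ⊗[ℝ] h)) := by
      intro m hm
      rw [SetLike.mem_coe] at hm ⊢
      simpa [Module.algebraMap_end_apply] using Submodule.smul_mem _ (χs X) hm
    have hnilres : IsNilpotent ((A X - algebraMap ℂ (Module.End ℂ (ℂ ⊗[ℝ] h)) (χs X)).restrict hmt) := by
      have hq : Set.MapsTo (A X - algebraMap ℂ (Module.End ℂ (ℂ ⊗[ℝ] h)) (χs X))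
          ((A X).maxGenEigenspace (χs X) : Set (ℂ ⊗[ℝ] h))
          ((A X).maxGenEigenspace (χs X) : Set (ℂ ⊗[ℝ] h)) :=
        Module.End.mapsTo_maxGenEigenspace_of_comm
          (Algebra.mul_sub_algebraMap_commutes (A X) (χs X)) (χs X)
      exact Module.End.isNilpotent_restrict_of_le (hq := hq)
        (iInf_le (fun X' => (A X').maxGenEigenspace (χs X')) X)
        ((A X).isNilpotent_restrict_maxGenEigenspace_sub_algebraMap (χs X))
    have hsplit : (A X).restrict (hWmaps X)
        = (A X - algebraMap ℂ (Module.End ℂ (ℂ ⊗[ℝ] h)) (χs X)).restrict hmt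
          + (algebraMap ℂ (Module.End ℂ (ℂ ⊗[ℝ] h)) (χs X)).restrict halg := by
      ext m
      simp [LinearMap.restrict_apply, aux_restrict_coe_apply, Module.algebraMap_end_apply]
    have htr0 : LinearMap.trace ℂ W
        ((A X - algebraMap ℂ (Module.End ℂ (ℂ ⊗[ℝ] h)) (χs X)).restrict hmt) = 0 := by
      have := LinearMap.isNilpotent_trace_of_isNilpotent hnilres
      exact this.eq_zero
    have htr1 : LinearMap.trace ℂ W
        ((algebraMap ℂ (Module.End ℂ (ℂ ⊗[ℝ] h)) (χs X)).restrict halg)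
        = (finrank ℂ W : ℂ) * χs X := by
      have h2 : (algebraMap ℂ (Module.End ℂ (ℂ ⊗[ℝ] h)) (χs X)).restrict halg
          = χs X • (1 : Module.End ℂ W) := by
        ext m
        simp [LinearMap.restrict_apply, aux_restrict_coe_apply, Module.algebraMap_end_apply]
      rw [h2, map_smul, LinearMap.trace_one, smul_eq_mul, mul_comm]
    rw [hsplit, map_add, htr0, htr1, zero_add]
  -- restriction is additive / ℝ-homogeneous / bracket-compatible in `X`
  have hresadd : ∀ X Y : g, (A (X + Y)).restrict (hWmaps (X + Y))
      = (A X).restrict (hWmaps X) + (A Y).restrict (hWmaps Y) := by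
    intro X Y
    ext m
    have h1 : A (X + Y) = A X + A Y := by
      have h2 := congrArg φbc (ρ.map_add X Y)
      exact h2.trans (map_add φbc _ _)
    simp [LinearMap.restrict_apply, aux_restrict_coe_apply, h1]
  have hressmul : ∀ (r : ℝ) (X : g), (A (r • X)).restrict (hWmaps (r • X))
      = (algebraMap ℝ ℂ r) • ((A X).restrict (hWmaps X)) := by
    intro r X
    ext m
    have h1 : A (r • X) = r • A X := by
      show LinearMap.baseChange ℂ (ρ (r • X)) = r • LinearMap.baseChange ℂ (ρ X)
      rw [show ρ (r • X) = r • ρ X from ρ.toLinearMap.map_smul r X, LinearMap.baseChange_smul]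
    have h2 : (r : ℂ) • A X = r • A X := algebraMap_smul ℂ r (A X)
    simp [LinearMap.restrict_apply, aux_restrict_coe_apply, h1, ← h2]
    rfl
  -- the character
  set α : g →ₗ[ℝ] ℂ :=
    { toFun := fun X => (finrank ℂ W : ℂ)⁻¹ * LinearMap.trace ℂ W ((A X).restrict (hWmaps X))
      map_add' := by
        intro X Y
        show (finrank ℂ W : ℂ)⁻¹ * LinearMap.trace ℂ W ((A (X + Y)).restrict (hWmaps (X + Y)))
          = (finrank ℂ W : ℂ)⁻¹ * LinearMap.trace ℂ W ((A X).restrict (hWmaps X))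
            + (finrank ℂ W : ℂ)⁻¹ * LinearMap.trace ℂ W ((A Y).restrict (hWmaps Y))
        rw [hresadd X Y, map_add]
        ring
      map_smul' := by
        intro r X
        show (finrank ℂ W : ℂ)⁻¹ * LinearMap.trace ℂ W
            ((A (r • X)).restrict (hWmaps (r • X)))
          = (RingHom.id ℝ) r •
            ((finrank ℂ W : ℂ)⁻¹ * LinearMap.trace ℂ W ((A X).restrict (hWmaps X)))
        rw [hressmul r X, map_smul]
        simp only [smul_eq_mul, RingHom.id_apply]
        have : (algebraMap ℝ ℂ r) = (r : ℂ) := rfl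
        rw [this]
        simp [Complex.real_smul]
        ring } with hα
  have hαval : ∀ X, α X = χs X := by
    intro X
    show (finrank ℂ W : ℂ)⁻¹ * LinearMap.trace ℂ W ((A X).restrict (hWmaps X)) = χs X
    rw [htr X, inv_mul_cancel_left₀ hdC]
  refine ⟨α, ?_, ?_, ?_, ?_⟩
  · -- character property
    intro X Y
    show (finrank ℂ W : ℂ)⁻¹ * LinearMap.trace ℂ W ((A ⁅X, Y⁆).restrict (hWmaps ⁅X, Y⁆)) = 0
    have h1 : A ⁅X, Y⁆ = A X * A Y - A Y * A X := by
      have h0 : ρ ⁅X, Y⁆ = ρ X * ρ Y - ρ Y * ρ X := by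
        rw [LieHom.map_lie]; exact Ring.lie_def _ _
      have h2 := congrArg φbc h0
      simp only [map_sub, map_mul] at h2
      exact h2
    have h2 : (A ⁅X, Y⁆).restrict (hWmaps ⁅X, Y⁆)
        = ((A X).restrict (hWmaps X)) * ((A Y).restrict (hWmaps Y))
          - ((A Y).restrict (hWmaps Y)) * ((A X).restrict (hWmaps X)) := by
      ext m
      simp [LinearMap.restrict_apply, aux_restrict_coe_apply, h1, Module.End.mul_apply, LinearMap.sub_apply]
    rw [h2]
    have h3 := LinearMap.trace_mul_comm ℂ ((A X).restrict (hWmaps X)) ((A Y).restrict (hWmaps Y))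
    have h4 := LinearMap.map_sub (LinearMap.trace ℂ W)
      (((A X).restrict (hWmaps X)) * ((A Y).restrict (hWmaps Y)))
      (((A Y).restrict (hWmaps Y)) * ((A X).restrict (hWmaps X)))
    rw [h4, h3, sub_self, mul_zero]
  · -- nonzero real part
    refine ⟨X₀, ?_⟩
    rw [hαval X₀]
    exact abs_pos.mp ha0pos
  · -- nonzero weight vector
    obtain ⟨v, hvW, hv0⟩ := Submodule.exists_mem_ne_zero_of_ne_bot hWne
    refine ⟨v, hv0, fun X => ?_⟩
    rw [hαval X]
    exact hscal X (χs X) v ((hmemW v).mp hvW X)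
  · -- vanishing bracket
    intro v w hv hw
    by_contra hbz
    set β : g → ℂ := fun X => α X + (starRingEnd ℂ) (α X) with hβ
    have hvmem : ∀ X, v ∈ (A X).maxGenEigenspace (α X) := fun X => hmemmax X (α X) v (hv X)
    have hwmem : ∀ X, w ∈ (A X).maxGenEigenspace ((starRingEnd ℂ) (α X)) :=
      fun X => hmemmax X _ w (hw X)
    have humem : ∀ X, ⁅v, w⁆ ∈ (A X).maxGenEigenspace (β X) :=
      fun X => hbr X _ _ v w (hvmem X) (hwmem X)
    have hβP : β ∈ P := by
      rw [hP, Set.mem_setOf_eq, Submodule.ne_bot_iff]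
      exact ⟨⁅v, w⁆, (Submodule.mem_iInf _).mpr humem, hbz⟩
    have hβT : |(β X₀).re| ∈ T := ⟨β, hβP, rfl⟩
    have hle : |(β X₀).re| ≤ t0 := by simpa using hmax _ hβT
    have hχst' : |(χs X₀).re| = t0 := hχst
    rw [← hχst'] at hle
    have hre : (β X₀).re = 2 * (χs X₀).re := by
      rw [hβ]
      simp only [Complex.add_re, Complex.conj_re, hαval X₀]
      ring
    rw [hre] at hle
    have : |2 * (χs X₀).re| = 2 * |(χs X₀).re| := by
      rw [abs_mul]
      norm_num
    rw [this] at hle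
    linarith
end
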